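/- arXiv:1606.00957 — 9 statements merged into one kernel-verified Lean document; each statement's English description precedes it below -/
import Mathlib

section
/- Let 𝕊¹ and 𝕊² be metric spaces and Φ : 𝕊¹ → 2^{𝕊²}∖{∅} a set-valued mapping with nonempty values. If u : 𝕊¹×𝕊² → ℝ∪{±∞} is K-inf-compact on Gr(Φ), then the value function v(s¹) := inf_{s²∈Φ(s¹)} u(s¹,s²) is lower semi-continuous on 𝕊¹. -/
open Filter Topology Set

/-- `f` is inf-compact on `U`: all level sets `{y ∈ U : f y ≤ λ}`, `λ ∈ ℝ`, are compact. -/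
def InfCompactOn {E : Type*} [TopologicalSpace E] (f : E → EReal) (U : Set E) : Prop :=
  ∀ lam : ℝ, IsCompact {y ∈ U | f y ≤ (lam : EReal)}

/-- `u` is `K`-inf-compact on the graph of `Φ`: for every nonempty compact `K ⊆ S1`,
the restriction of `u` to `Gr_K(Φ) = {(s¹,s²) : s¹ ∈ K, s² ∈ Φ s¹}` is inf-compact. -/
def KInfCompactOn {S1 S2 : Type*} [TopologicalSpace S1] [TopologicalSpace S2]
    (u : S1 × S2 → EReal) (Φ : S1 → Set S2) : Prop :=
  ∀ K : Set S1, K.Nonempty → IsCompact K →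
    InfCompactOn u {p : S1 × S2 | p.1 ∈ K ∧ p.2 ∈ Φ p.1}

/-- If `u` is `K`-inf-compact on `Gr(Φ)`, then the value function
`v s¹ = inf_{s² ∈ Φ s¹} u (s¹, s²)` is lower semi-continuous. -/
theorem stmt0 {S1 S2 : Type*} [MetricSpace S1] [MetricSpace S2]
    (Φ : S1 → Set S2) (hΦ : ∀ s1, (Φ s1).Nonempty)
    (u : S1 × S2 → EReal) (hu : KInfCompactOn u Φ) :
    LowerSemicontinuous (fun s1 : S1 => ⨅ s2 ∈ Φ s1, u (s1, s2)) := by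
  set v : S1 → EReal := fun s1 => ⨅ s2 ∈ Φ s1, u (s1, s2) with hv
  -- closedness of real sublevel sets
  have hclosed : ∀ lam : ℝ, IsClosed {x : S1 | v x ≤ (lam : EReal)} := by
    intro lam
    refine IsSeqClosed.isClosed ?_
    intro x p hmem hxp
    show v p ≤ (lam : EReal)
    rw [← EReal.le_of_forall_lt_iff_le]
    intro lam' hlt
    -- choose points s2 n with u (x n, s2 n) < lam'
    have hex : ∀ n, ∃ s2 ∈ Φ (x n), u (x n, s2) < (lam' : EReal) := by
      intro n
      have : v (x n) < (lam' : EReal) := lt_of_le_of_lt (hmem n) hlt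
      simpa [hv, iInf_lt_iff] using this
    choose s2 hs2 hus2 using hex
    set K : Set S1 := insert p (Set.range x) with hK
    have hKc : IsCompact K := hxp.isCompact_insert_range
    have hC : IsCompact {q ∈ {q : S1 × S2 | q.1 ∈ K ∧ q.2 ∈ Φ q.1} |
        u q ≤ (lam' : EReal)} := hu K ⟨p, mem_insert _ _⟩ hKc lam'
    have hmemC : ∀ n, (x n, s2 n) ∈ {q ∈ {q : S1 × S2 | q.1 ∈ K ∧ q.2 ∈ Φ q.1} |
        u q ≤ (lam' : EReal)} := fun n =>
      ⟨⟨mem_insert_of_mem _ ⟨n, rfl⟩, hs2 n⟩, (hus2 n).le⟩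
    obtain ⟨q, hq, φ, hφ, hqt⟩ := hC.tendsto_subseq hmemC
    -- first coordinate of q is p
    have h1 : Tendsto (fun k => x (φ k)) atTop (𝓝 q.1) :=
      (continuous_fst.continuousAt.tendsto.comp hqt)
    have h2 : Tendsto (fun k => x (φ k)) atTop (𝓝 p) :=
      hxp.comp hφ.tendsto_atTop
    have hq1 : q.1 = p := tendsto_nhds_unique h1 h2
    have hvq : v p ≤ u (p, q.2) := by
      have := hq.1.2
      rw [hq1] at this
      exact iInf₂_le _ this
    calc v p ≤ u (p, q.2) := hvq
      _ = u q := by rw [← hq1]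
      _ ≤ (lam' : EReal) := hq.2
  -- now deduce lower semicontinuity
  rw [lowerSemicontinuous_iff_isClosed_preimage]
  intro y
  induction y using EReal.rec with
  | bot =>
    have : v ⁻¹' Iic ⊥ = ⋂ n : ℕ, {x : S1 | v x ≤ ((-n : ℝ) : EReal)} := by
      ext x
      simp only [mem_preimage, mem_Iic, le_bot_iff, mem_iInter, mem_setOf_eq]
      constructor
      · intro h n; simp [h]
      · intro h
        by_contra hne
        obtain ⟨r, -, hr⟩ := EReal.exists_between_coe_real (bot_lt_iff_ne_bot.2 hne)
        obtain ⟨n, hn⟩ := exists_nat_gt (-r)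
        have : v x ≤ ((-n : ℝ) : EReal) := h n
        have h2 : ((-n : ℝ) : EReal) < (r : EReal) := by
          exact_mod_cast (by linarith : (-n : ℝ) < r)
        exact absurd (this.trans_lt h2) (not_lt.2 hr.le)
    rw [show v ⁻¹' Iic ⊥ = {x : S1 | v x ≤ (⊥ : EReal)} from rfl] at *
    rw [this]
    exact isClosed_iInter fun n => hclosed _
  | coe r => exact hclosed r
  | top => simp [isClosed_univ]
end

section
/- Let 𝕊¹ and 𝕊² be metric spaces and Φ : 𝕊¹ → 2^{𝕊²}∖{∅} a set-valued mapping with nonempty values. Assume (a) Φ is lower semi-continuous and (b) u : 𝕊¹×𝕊² → ℝ is K-inf-compact on Gr(Φ) and upper semi-continuous on Gr(Φ). Then the value function v(s¹) := inf_{s²∈Φ(s¹)} u(s¹,s²) is a real-valued continuous function on 𝕊¹, and the solution multifunction Φ*(s¹) := {s² ∈ Φ(s¹) : v(s¹) = u(s¹,s²)} is nonempty and compact-valued for every s¹ ∈ 𝕊¹ and is upper semi-continuous as a set-valued mapping. -/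
open Filter Topology Set

/-- The value function `v s¹ = inf_{s² ∈ Φ s¹} u (s¹, s²)` (real-valued infimum). -/
noncomputable def valueFn {S1 S2 : Type*} (u : S1 × S2 → ℝ) (Φ : S1 → Set S2) (s1 : S1) : ℝ :=
  sInf ((fun s2 => u (s1, s2)) '' Φ s1)

/-- The solution multifunction `Φ* s¹ = {s² ∈ Φ s¹ : v s¹ = u (s¹, s²)}`. -/
noncomputable def solutionMap {S1 S2 : Type*} (u : S1 × S2 → ℝ) (Φ : S1 → Set S2)
    (s1 : S1) : Set S2 :=
  {s2 ∈ Φ s1 | valueFn u Φ s1 = u (s1, s2)}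

/-- Berge's maximum theorem for possibly noncompact sets: if `Φ` is lower semi-continuous
with nonempty values, and `u` is `K`-inf-compact and upper semi-continuous on `Gr(Φ)`, then the
value function `v` is continuous and real-valued, and the solution multifunction `Φ*` is
nonempty compact-valued and upper semi-continuous. -/
theorem stmt1 {S1 S2 : Type*} [MetricSpace S1] [MetricSpace S2]
    (Φ : S1 → Set S2) (hΦne : ∀ s1, (Φ s1).Nonempty)
    (hΦlsc : ∀ s1 : S1, ∀ G : Set S2, IsOpen G → (Φ s1 ∩ G).Nonempty →
      {s : S1 | (Φ s ∩ G).Nonempty} ∈ nhds s1)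
    (u : S1 × S2 → ℝ)
    (hKinf : KInfCompactOn (fun p => ((u p : ℝ) : EReal)) Φ)
    (husc : UpperSemicontinuousOn u {p : S1 × S2 | p.2 ∈ Φ p.1}) :
    Continuous (valueFn u Φ) ∧
    (∀ s1, (solutionMap u Φ s1).Nonempty) ∧
    (∀ s1, IsCompact (solutionMap u Φ s1)) ∧
    (∀ s1 : S1, ∀ G : Set S2, IsOpen G → solutionMap u Φ s1 ⊆ G →
      {s : S1 | solutionMap u Φ s ⊆ G} ∈ nhds s1) := by
  -- level sets over compact K are compact
  have hlevel : ∀ K : Set S1, K.Nonempty → IsCompact K → ∀ lam : ℝ,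
      IsCompact {p : S1 × S2 | (p.1 ∈ K ∧ p.2 ∈ Φ p.1) ∧ u p ≤ lam} := by
    intro K hKne hKc lam
    have h := hKinf K hKne hKc lam
    convert h using 1
    ext p
    simp [EReal.coe_le_coe_iff]
  -- fiberwise level sets are compact
  have hC : ∀ (s : S1) (μ : ℝ), IsCompact {s2 : S2 | s2 ∈ Φ s ∧ u (s, s2) ≤ μ} := by
    intro s μ
    have hL := hlevel {s} ⟨s, rfl⟩ isCompact_singleton μ
    have heq : {s2 : S2 | s2 ∈ Φ s ∧ u (s, s2) ≤ μ}
        = Prod.snd '' {p : S1 × S2 | (p.1 ∈ ({s} : Set S1) ∧ p.2 ∈ Φ p.1) ∧ u p ≤ μ} := by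
      ext s2
      constructor
      · rintro ⟨h1, h2⟩; exact ⟨(s, s2), ⟨⟨rfl, h1⟩, h2⟩, rfl⟩
      · rintro ⟨⟨a, b⟩, ⟨⟨ha, hb⟩, hu⟩, rfl⟩
        simp only [Set.mem_singleton_iff] at ha
        subst ha; exact ⟨hb, hu⟩
    rw [heq]
    exact hL.image continuous_snd
  -- boundedness below of the fiber images
  have hbdd : ∀ s : S1, BddBelow ((fun s2 => u (s, s2)) '' Φ s) := by
    intro s
    by_contra hnb
    obtain ⟨s2₀, h0⟩ := hΦne s
    rw [not_bddBelow_iff] at hnb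
    set lam0 := u (s, s2₀) with hlam0
    have hne : ∀ n : ℕ, {s2 : S2 | s2 ∈ Φ s ∧ u (s, s2) ≤ lam0 - n}.Nonempty := by
      intro n
      obtain ⟨a, ⟨s2, hs2, rfl⟩, ha⟩ := hnb (lam0 - n)
      exact ⟨s2, hs2, ha.le⟩
    have hint := IsCompact.nonempty_iInter_of_sequence_nonempty_isCompact_isClosed
      (fun n => {s2 : S2 | s2 ∈ Φ s ∧ u (s, s2) ≤ lam0 - n})
      (fun n s2 hs2 => ⟨hs2.1, hs2.2.trans (by push_cast; linarith)⟩)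
      hne (hC s _) (fun n => (hC s _).isClosed)
    obtain ⟨s2, hs2⟩ := hint
    simp only [Set.mem_iInter, Set.mem_setOf_eq] at hs2
    obtain ⟨n, hn⟩ := exists_nat_gt (lam0 - u (s, s2))
    have := (hs2 n).2
    linarith
  -- the infimum is attained
  have hmin : ∀ s : S1, ∃ s2 ∈ Φ s, u (s, s2) = valueFn u Φ s := by
    intro s
    have hAne : ((fun s2 => u (s, s2)) '' Φ s).Nonempty := (hΦne s).image _
    have hne : ∀ n : ℕ,
        {s2 : S2 | s2 ∈ Φ s ∧ u (s, s2) ≤ valueFn u Φ s + 1 / (n + 1)}.Nonempty := by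
      intro n
      have hpos : (0:ℝ) < 1 / ((n:ℝ) + 1) := by positivity
      have hlt : sInf ((fun s2 => u (s, s2)) '' Φ s) < valueFn u Φ s + 1 / (n + 1) := by
        have : valueFn u Φ s = sInf ((fun s2 => u (s, s2)) '' Φ s) := rfl
        linarith
      obtain ⟨a, ⟨s2, hs2, rfl⟩, ha⟩ := (csInf_lt_iff (hbdd s) hAne).1 hlt
      exact ⟨s2, hs2, ha.le⟩
    have hint := IsCompact.nonempty_iInter_of_sequence_nonempty_isCompact_isClosed
      (fun n => {s2 : S2 | s2 ∈ Φ s ∧ u (s, s2) ≤ valueFn u Φ s + 1 / (n + 1)})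
      (fun n s2 hs2 => by
        refine ⟨hs2.1, hs2.2.trans ?_⟩
        have h1 : (0:ℝ) < (n:ℝ) + 1 := by positivity
        have h2 : ((n:ℝ) + 1) ≤ ((n+1:ℕ):ℝ) + 1 := by push_cast; linarith
        have := one_div_le_one_div_of_le h1 h2
        linarith)
      hne (hC s _) (fun n => (hC s _).isClosed)
    obtain ⟨s2, hs2⟩ := hint
    simp only [Set.mem_iInter, Set.mem_setOf_eq] at hs2
    refine ⟨s2, (hs2 0).1, le_antisymm ?_ (csInf_le (hbdd s) ⟨s2, (hs2 0).1, rfl⟩)⟩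
    refine le_of_forall_pos_le_add fun ε hε => ?_
    obtain ⟨n, hn⟩ := exists_nat_one_div_lt hε
    exact (hs2 n).2.trans (by linarith)
  have hvle : ∀ s : S1, ∀ s2 ∈ Φ s, valueFn u Φ s ≤ u (s, s2) :=
    fun s s2 h => csInf_le (hbdd s) ⟨s2, h, rfl⟩
  -- solution map as a level set
  have hsol_eq : ∀ s : S1,
      solutionMap u Φ s = {s2 : S2 | s2 ∈ Φ s ∧ u (s, s2) ≤ valueFn u Φ s} := by
    intro s; ext s2
    constructor
    · rintro ⟨h1, h2⟩; exact ⟨h1, h2.ge⟩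
    · rintro ⟨h1, h2⟩; exact ⟨h1, le_antisymm (hvle s s2 h1) h2⟩
  have hsolne : ∀ s : S1, (solutionMap u Φ s).Nonempty := by
    intro s
    obtain ⟨s2, hs2, heq⟩ := hmin s
    exact ⟨s2, hs2, heq.symm⟩
  have hsolc : ∀ s : S1, IsCompact (solutionMap u Φ s) := by
    intro s; rw [hsol_eq s]; exact hC s _
  -- upper semicontinuity of v
  have husc_v : UpperSemicontinuous (valueFn u Φ) := by
    intro s lam hlam
    obtain ⟨s2, hs2, heq⟩ := hmin s
    have hmem : (s, s2) ∈ {p : S1 × S2 | p.2 ∈ Φ p.1} := hs2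
    have h1 : u (s, s2) < lam := by rw [heq]; exact hlam
    have h2 := husc (s, s2) hmem lam h1
    rw [eventually_nhdsWithin_iff] at h2
    obtain ⟨U, V, hUo, hsU, hVo, hs2V, hUV⟩ := mem_nhds_prod_iff'.1 h2
    have hNG := hΦlsc s V hVo ⟨s2, hs2, hs2V⟩
    filter_upwards [hNG, hUo.mem_nhds hsU] with s' hs' hsU'
    obtain ⟨s2', hs2'Φ, hs2'V⟩ := hs'
    have hlt : u (s', s2') < lam := hUV (Set.mk_mem_prod hsU' hs2'V) hs2'Φ
    exact lt_of_le_of_lt (hvle s' s2' hs2'Φ) hlt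
  -- lower semicontinuity of v
  have hlsc_v : LowerSemicontinuous (valueFn u Φ) := by
    intro s lam hlam
    by_contra hcon
    rw [Filter.not_eventually] at hcon
    obtain ⟨x, hx, hxp⟩ := Filter.frequently_iff_seq_forall.1 hcon
    have hKc : IsCompact (insert s (Set.range x)) := hx.isCompact_insert_range
    choose y hy hyeq using fun n => hmin (x n)
    set L := {p : S1 × S2 | (p.1 ∈ insert s (Set.range x) ∧ p.2 ∈ Φ p.1) ∧ u p ≤ lam} with hLdef
    have hmemL : ∀ n, (x n, y n) ∈ L := by
      intro n
      exact ⟨⟨Or.inr ⟨n, rfl⟩, hy n⟩, by rw [hyeq n]; exact not_lt.1 (hxp n)⟩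
    have hLc := hlevel _ ⟨s, Or.inl rfl⟩ hKc lam
    obtain ⟨p, hpL, φ, hφ, hφt⟩ := hLc.tendsto_subseq hmemL
    obtain ⟨p1, p2⟩ := p
    have h1 : Tendsto (fun n => x (φ n)) atTop (𝓝 s) := hx.comp hφ.tendsto_atTop
    have h2 : Tendsto (fun n => x (φ n)) atTop (𝓝 p1) :=
      (continuous_fst.tendsto (p1, p2)).comp hφt
    have hp1 : p1 = s := tendsto_nhds_unique h2 h1
    rw [hp1] at hpL
    have hle : valueFn u Φ s ≤ lam := (hvle s p2 hpL.1.2).trans hpL.2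
    linarith
  -- continuity of v
  have hcont : Continuous (valueFn u Φ) := by
    rw [continuous_iff_continuousAt]
    intro s
    rw [ContinuousAt, tendsto_order]
    exact ⟨fun b hb => hlsc_v s b hb, fun b hb => husc_v s b hb⟩
  refine ⟨hcont, hsolne, hsolc, ?_⟩
  -- upper semicontinuity of the solution map
  intro s G hGo hGsub
  by_contra hcon
  have hcon2 : ¬ ∀ᶠ s' in 𝓝 s, solutionMap u Φ s' ⊆ G := hcon
  rw [Filter.not_eventually] at hcon2
  obtain ⟨x, hx, hxp⟩ := Filter.frequently_iff_seq_forall.1 hcon2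
  have hpick : ∀ n, ∃ s2, s2 ∈ Φ (x n) ∧ u (x n, s2) ≤ valueFn u Φ (x n) ∧ s2 ∉ G := by
    intro n
    obtain ⟨s2, hs2, hs2G⟩ := Set.not_subset.1 (hxp n)
    exact ⟨s2, hs2.1, hs2.2.ge, hs2G⟩
  choose y hyΦ hyle hyG using hpick
  have hvx : Tendsto (fun n => valueFn u Φ (x n)) atTop (𝓝 (valueFn u Φ s)) :=
    (hcont.tendsto s).comp hx
  obtain ⟨N, hN⟩ := Filter.eventually_atTop.1
    (hvx.eventually_lt_const (lt_add_one (valueFn u Φ s)))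
  have hKc : IsCompact (insert s (Set.range x)) := hx.isCompact_insert_range
  set K := insert s (Set.range x) with hKdef
  have hKne : K.Nonempty := ⟨s, Or.inl rfl⟩
  -- shifted sequence lands in a compact level set
  have hmemL : ∀ n, (x (n + N), y (n + N)) ∈
      {p : S1 × S2 | (p.1 ∈ K ∧ p.2 ∈ Φ p.1) ∧ u p ≤ valueFn u Φ s + 1} := by
    intro n
    refine ⟨⟨Or.inr ⟨n + N, rfl⟩, hyΦ (n + N)⟩, ?_⟩
    exact (hyle (n + N)).trans (hN (n + N) (Nat.le_add_left N n)).le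
  have hLc := hlevel K hKne hKc (valueFn u Φ s + 1)
  obtain ⟨p, hpL, φ, hφ, hφt⟩ := hLc.tendsto_subseq hmemL
  obtain ⟨p1, p2⟩ := p
  have hidx : Tendsto (fun n => φ n + N) atTop atTop :=
    tendsto_atTop_mono (fun n => le_trans (hφ.id_le n) (Nat.le_add_right _ N)) tendsto_id
  have h1 : Tendsto (fun n => x (φ n + N)) atTop (𝓝 s) := hx.comp hidx
  have h2 : Tendsto (fun n => x (φ n + N)) atTop (𝓝 p1) :=
    (continuous_fst.tendsto (p1, p2)).comp hφt
  have hp1 : p1 = s := tendsto_nhds_unique h2 h1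
  rw [hp1] at hpL hφt
  have hp2Φ : p2 ∈ Φ s := hpL.1.2
  -- u (s, p2) ≤ v s
  have hkey : u (s, p2) ≤ valueFn u Φ s := by
    refine le_of_forall_pos_le_add fun ε hε => ?_
    have hLεc := hlevel K hKne hKc (valueFn u Φ s + ε)
    refine (hLεc.isClosed.mem_of_tendsto hφt ?_).2
    have hev : ∀ᶠ n in atTop, valueFn u Φ (x (φ n + N)) < valueFn u Φ s + ε :=
      (hvx.comp hidx).eventually_lt_const (by linarith)
    filter_upwards [hev] with n hn
    exact ⟨⟨Or.inr ⟨φ n + N, rfl⟩, hyΦ (φ n + N)⟩, (hyle (φ n + N)).trans hn.le⟩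
  have hp2sol : p2 ∈ solutionMap u Φ s := ⟨hp2Φ, le_antisymm (hvle s p2 hp2Φ) hkey⟩
  have hp2G : p2 ∈ G := hGsub hp2sol
  -- second coordinates converge to p2 ∈ G, contradicting y ∉ G
  have h3 : Tendsto (fun n => y (φ n + N)) atTop (𝓝 p2) :=
    (continuous_snd.tendsto (s, p2)).comp hφt
  have hev2 : ∀ᶠ n in atTop, y (φ n + N) ∈ G := h3.eventually (hGo.mem_nhds hp2G)
  obtain ⟨n, hn⟩ := hev2.exists
  exact hyG (φ n + N) hn
end

section
/- Let 𝕊¹ and 𝕊² be metric spaces and Φ : 𝕊¹ → 2^{𝕊²}∖{∅} a set-valued mapping with nonempty values. If u : 𝕊¹×𝕊² → ℝ∪{±∞} is lower semi-continuous on Gr(Φ), Φ is upper semi-continuous, and Φ(s¹) is compact for every s¹ ∈ 𝕊¹, then u is K-inf-compact on Gr(Φ). -/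
open Filter Topology Set

/-- The graph of a usc compact-valued map over a compact set is compact. -/
lemma grK_compact {S1 S2 : Type*} [TopologicalSpace S1] [TopologicalSpace S2]
    (Φ : S1 → Set S2)
    (hΦusc : ∀ s1 : S1, ∀ G : Set S2, IsOpen G → Φ s1 ⊆ G →
      {s : S1 | Φ s ⊆ G} ∈ nhds s1)
    (hΦcomp : ∀ s1, IsCompact (Φ s1))
    {K : Set S1} (hKcomp : IsCompact K) :
    IsCompact {p : S1 × S2 | p.1 ∈ K ∧ p.2 ∈ Φ p.1} := by
  rw [isCompact_iff_ultrafilter_le_nhds]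
  intro F hF
  have hF' : {p : S1 × S2 | p.1 ∈ K ∧ p.2 ∈ Φ p.1} ∈ F := le_principal_iff.1 hF
  have hfst : (F.map Prod.fst : Filter S1) ≤ 𝓟 K := by
    rw [le_principal_iff]
    exact Filter.mem_map.2 (Filter.mem_of_superset hF' (fun p hp => hp.1))
  obtain ⟨s, hsK, hs⟩ := hKcomp.ultrafilter_le_nhds (F.map Prod.fst) hfst
  by_contra hcon
  push_neg at hcon
  have key : ∀ t : S2, ∃ UV : Set S1 × Set S2, IsOpen UV.1 ∧ s ∈ UV.1 ∧
      (t ∈ Φ s → IsOpen UV.2 ∧ t ∈ UV.2 ∧ UV.1 ×ˢ UV.2 ∉ F) := by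
    intro t
    by_cases ht : t ∈ Φ s
    · have hnot : ¬ (F : Filter (S1 × S2)) ≤ 𝓝 (s, t) := by
        intro hle
        exact hcon (s, t) ⟨hsK, ht⟩ hle
      rw [Filter.le_def] at hnot
      push_neg at hnot
      obtain ⟨W, hW, hWF⟩ := hnot
      obtain ⟨uu, vv, huo, hsu, hvo, htv, huv⟩ := mem_nhds_prod_iff'.1 hW
      refine ⟨(uu, vv), huo, hsu, fun _ => ⟨hvo, htv, fun h => hWF (F.mem_of_superset h huv)⟩⟩
    · exact ⟨(univ, univ), isOpen_univ, mem_univ s, fun h => absurd h ht⟩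
  choose UV hU hsU hrest using key
  obtain ⟨T, hTcov⟩ := (hΦcomp s).elim_nhds_subcover' (fun t _ => (UV t).2)
    (fun t ht => ((hrest t ht).1).mem_nhds (hrest t ht).2.1)
  set G : Set S2 := ⋃ t ∈ T, (UV (t : S2)).2 with hG
  have hGopen : IsOpen G := isOpen_biUnion (fun t _ => (hrest t t.2).1)
  have hW : {s' | Φ s' ⊆ G} ∈ 𝓝 s := hΦusc s G hGopen hTcov
  have hUmem : (⋂ t ∈ T, (UV (t : S2)).1) ∈ 𝓝 s :=
    (Filter.biInter_finset_mem T).2 (fun t _ => (hU t).mem_nhds (hsU t))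
  have h1 : Prod.fst ⁻¹' ((⋂ t ∈ T, (UV (t : S2)).1) ∩ {s' | Φ s' ⊆ G}) ∈ F :=
    hs (Filter.inter_mem hUmem hW)
  have h2 : (⋂ t ∈ T, ((UV (t : S2)).1 ×ˢ (UV (t : S2)).2)ᶜ) ∈ F :=
    (Filter.biInter_finset_mem T).2
      (fun t _ => (Ultrafilter.compl_mem_iff_notMem).2 (hrest t t.2).2.2)
  have h3 := Filter.inter_mem hF' (Filter.inter_mem h1 h2)
  obtain ⟨p, ⟨hpK, hpΦ⟩, ⟨hp1, hp2⟩⟩ := F.nonempty_of_mem h3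
  have hp1' : p.1 ∈ ⋂ t ∈ T, (UV (t : S2)).1 := (mem_preimage.1 hp1).1
  have hpG : p.2 ∈ G := (mem_preimage.1 hp1).2 hpΦ
  obtain ⟨t, htT, hptV⟩ := mem_iUnion₂.1 hpG
  have : p ∈ (UV (t : S2)).1 ×ˢ (UV (t : S2)).2 :=
    ⟨mem_iInter₂.1 hp1' t htT, hptV⟩
  exact mem_iInter₂.1 hp2 t htT this

/-- If `u` is lower semi-continuous on `Gr(Φ)`, `Φ` is upper semi-continuous with nonempty
compact values, then `u` is `K`-inf-compact on `Gr(Φ)`. -/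
theorem stmt2 {S1 S2 : Type*} [MetricSpace S1] [MetricSpace S2]
    (Φ : S1 → Set S2) (hΦne : ∀ s1, (Φ s1).Nonempty)
    (hΦusc : ∀ s1 : S1, ∀ G : Set S2, IsOpen G → Φ s1 ⊆ G →
      {s : S1 | Φ s ⊆ G} ∈ nhds s1)
    (hΦcomp : ∀ s1, IsCompact (Φ s1))
    (u : S1 × S2 → EReal)
    (hlsc : LowerSemicontinuousOn u {p : S1 × S2 | p.2 ∈ Φ p.1}) :
    KInfCompactOn u Φ := by
  intro K _ hKcomp lam
  have hGrK := grK_compact Φ hΦusc hΦcomp hKcomp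
  set L := {p : S1 × S2 | (p.1 ∈ K ∧ p.2 ∈ Φ p.1) ∧ u p ≤ (lam : EReal)} with hL
  have hsub : L ⊆ {p : S1 × S2 | p.1 ∈ K ∧ p.2 ∈ Φ p.1} := fun p hp => hp.1
  have hclosed : IsClosed L := by
    rw [isClosed_iff_clusterPt]
    intro p hp
    have hpGrK : p ∈ {q : S1 × S2 | q.1 ∈ K ∧ q.2 ∈ Φ q.1} := by
      have hc := hGrK.isClosed
      have : p ∈ closure {q : S1 × S2 | q.1 ∈ K ∧ q.2 ∈ Φ q.1} :=
        closure_mono hsub (mem_closure_iff_clusterPt.2 hp)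
      rwa [hc.closure_eq] at this
    refine ⟨hpGrK, ?_⟩
    by_contra hgt
    push_neg at hgt
    have := hlsc p hpGrK.2 (lam : EReal) hgt
    have hne : (𝓝[L] p).NeBot := by
      rw [← mem_closure_iff_nhdsWithin_neBot]
      exact mem_closure_iff_clusterPt.2 hp
    have h2 : ∀ᶠ x in 𝓝[L] p, (lam : EReal) < u x :=
      Filter.Eventually.filter_mono (nhdsWithin_mono p (fun q hq => hq.1.2)) this
    have h3 : ∀ᶠ x in 𝓝[L] p, u x ≤ (lam : EReal) :=
      eventually_nhdsWithin_of_forall (fun q hq => hq.2)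
    obtain ⟨x, hx1, hx2⟩ := (h2.and h3).exists
    exact absurd hx2 (not_le.2 hx1)
  have : L = {y ∈ {p : S1 × S2 | p.1 ∈ K ∧ p.2 ∈ Φ p.1} | u y ≤ (lam : EReal)} := rfl
  rw [← this]
  exact hGrK.of_isClosed_subset hclosed hsub
end

section
/- Let 𝕊¹ and 𝕊² be metric spaces and Φ : 𝕊¹ → 2^{𝕊²}∖{∅} a set-valued mapping with nonempty values. If u : 𝕊¹×𝕊² → ℝ∪{±∞} is K-inf-compact on Gr(Φ), then u is lower semi-continuous on Gr(Φ). -/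
open Filter Topology Set

/-- A `K`-inf-compact function `u` on `Gr(Φ)` is lower semi-continuous on `Gr(Φ)`. -/
theorem stmt5 {S1 S2 : Type*} [MetricSpace S1] [MetricSpace S2]
    (Φ : S1 → Set S2) (hΦne : ∀ s1, (Φ s1).Nonempty)
    (u : S1 × S2 → EReal) (hu : KInfCompactOn u Φ) :
    LowerSemicontinuousOn u {p : S1 × S2 | p.2 ∈ Φ p.1} := by
  intro p hp y hy
  obtain ⟨lam, hylam, hlamu⟩ := EReal.exists_between_coe_real hy
  by_contra hcon
  have hfreq : ∃ᶠ x in 𝓝 p, x ∈ {x : S1 × S2 | (x.2 ∈ Φ x.1) ∧ u x ≤ (lam : EReal)} := by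
    rw [Filter.not_eventually] at hcon
    have := hcon.filter_mono (nhdsWithin_le_nhds)
    rw [frequently_nhdsWithin_iff] at hcon
    exact hcon.mono (fun x hx => ⟨hx.2, le_of_not_gt fun h => hx.1 (hylam.trans h)⟩)
  have hcl : p ∈ closure {x : S1 × S2 | (x.2 ∈ Φ x.1) ∧ u x ≤ (lam : EReal)} :=
    mem_closure_iff_frequently.2 hfreq
  obtain ⟨x, hxmem, hxlim⟩ := mem_closure_iff_seq_limit.1 hcl
  have hK : IsCompact (insert p.1 (Set.range (fun n => (x n).1))) :=
    Filter.Tendsto.isCompact_insert_range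
      ((continuous_fst.tendsto p).comp hxlim)
  have hD := hu _ ⟨p.1, Set.mem_insert _ _⟩ hK lam
  have hDcl : IsClosed {q : S1 × S2 |
      (q.1 ∈ insert p.1 (Set.range (fun n => (x n).1)) ∧ q.2 ∈ Φ q.1) ∧
        u q ≤ (lam : EReal)} := hD.isClosed
  have hpD : p ∈ {q : S1 × S2 |
      (q.1 ∈ insert p.1 (Set.range (fun n => (x n).1)) ∧ q.2 ∈ Φ q.1) ∧
        u q ≤ (lam : EReal)} := by
    apply hDcl.mem_of_tendsto hxlim
    filter_upwards with n
    exact ⟨⟨Set.mem_insert_of_mem _ ⟨n, rfl⟩, (hxmem n).1⟩, (hxmem n).2⟩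
  exact absurd hlamu (not_lt.2 hpD.2)
end

section
/- Let 𝕊¹ and 𝕊² be metric spaces and Φ : 𝕊¹ → 2^{𝕊²}∖{∅} a set-valued mapping with nonempty values. A function u : 𝕊¹×𝕊² → ℝ∪{±∞} is K-inf-compact on Gr(Φ) if and only if the following two conditions hold: (i) u is lower semi-continuous on Gr(Φ); and (ii) whenever a sequence {s¹_n} in 𝕊¹ converges to a limit s¹ ∈ 𝕊¹, every sequence {s²_n} with s²_n ∈ Φ(s¹_n) for all n such that the sequence {u(s¹_n,s²_n)} is bounded above has a limit point s² ∈ Φ(s¹). -/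
open Filter Topology Set

/-- `u` is `K`-inf-compact on `Gr(Φ)` if and only if (i) `u` is lower semi-continuous on
`Gr(Φ)`, and (ii) whenever a sequence `s¹ₙ → s¹` in `S1`, every sequence `s²ₙ ∈ Φ(s¹ₙ)` along
which `u (s¹ₙ, s²ₙ)` is bounded above has a limit (cluster) point `s² ∈ Φ s¹`. -/
theorem stmt6 {S1 S2 : Type*} [MetricSpace S1] [MetricSpace S2]
    (Φ : S1 → Set S2) (hΦne : ∀ s1, (Φ s1).Nonempty)
    (u : S1 × S2 → EReal) :
    KInfCompactOn u Φ ↔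
      (LowerSemicontinuousOn u {p : S1 × S2 | p.2 ∈ Φ p.1} ∧
       ∀ (s1seq : ℕ → S1) (s1 : S1), Tendsto s1seq atTop (nhds s1) →
         ∀ s2seq : ℕ → S2, (∀ n, s2seq n ∈ Φ (s1seq n)) →
           (∃ M : ℝ, ∀ n, u (s1seq n, s2seq n) ≤ (M : EReal)) →
           ∃ s2 ∈ Φ s1, MapClusterPt s2 atTop s2seq) := by
  constructor
  · intro h
    constructor
    · -- lower semicontinuity
      intro p hp lam hlam
      by_contra hcon
      rw [not_eventually] at hcon
      obtain ⟨r, hr1, hr2⟩ := EReal.exists_between_coe_real hlam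
      -- get a sequence in the graph tending to p with u ≤ lam
      have : (𝓝[{q : S1 × S2 | q.2 ∈ Φ q.1}] p).IsCountablyGenerated := by infer_instance
      obtain ⟨x, hx, hxp⟩ := exists_seq_forall_of_frequently hcon
      have hxG : ∀ᶠ n in atTop, x n ∈ {q : S1 × S2 | q.2 ∈ Φ q.1} :=
        hx.eventually (eventually_mem_nhdsWithin)
      have hxnh : Tendsto x atTop (𝓝 p) := hx.mono_right nhdsWithin_le_nhds
      obtain ⟨N, hN⟩ := eventually_atTop.1 hxG
      set y : ℕ → S1 × S2 := fun n => x (n + N) with hy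
      have hynh : Tendsto y atTop (𝓝 p) := hxnh.comp (tendsto_add_atTop_nat N)
      have hyG : ∀ n, y n ∈ {q : S1 × S2 | q.2 ∈ Φ q.1} := fun n => hN _ (Nat.le_add_left N n)
      have hyu : ∀ n, u (y n) ≤ (r : EReal) := fun n =>
        le_trans (not_lt.1 (hxp (n + N))) (le_of_lt hr1)
      -- compact level set over K = insert p.1 (range of first coordinates)
      have hK : IsCompact (insert p.1 (Set.range fun n => (y n).1)) :=
        Filter.Tendsto.isCompact_insert_range
          ((continuous_fst.tendsto p).comp hynh)
      have hC := h _ ⟨p.1, Set.mem_insert _ _⟩ hK r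
      have hmem : ∀ n, y n ∈ {q : S1 × S2 |
          (q.1 ∈ insert p.1 (Set.range fun n => (y n).1) ∧ q.2 ∈ Φ q.1) ∧
          u q ≤ (r : EReal)} := fun n =>
        ⟨⟨Set.mem_insert_of_mem _ ⟨n, rfl⟩, hyG n⟩, hyu n⟩
      have hclosed : IsClosed {q : S1 × S2 |
          (q.1 ∈ insert p.1 (Set.range fun n => (y n).1) ∧ q.2 ∈ Φ q.1) ∧
          u q ≤ (r : EReal)} := hC.isClosed
      have hpmem := hclosed.mem_of_tendsto hynh (Eventually.of_forall hmem)
      exact absurd hpmem.2 (not_le.2 hr2)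
    · -- condition (ii)
      intro s1seq s1 hs1 s2seq hs2 ⟨M, hM⟩
      have hK : IsCompact (insert s1 (Set.range s1seq)) := hs1.isCompact_insert_range
      have hC := h _ ⟨s1, Set.mem_insert _ _⟩ hK M
      have hmem : ∀ n, (s1seq n, s2seq n) ∈ {q : S1 × S2 |
          (q.1 ∈ insert s1 (Set.range s1seq) ∧ q.2 ∈ Φ q.1) ∧ u q ≤ (M : EReal)} :=
        fun n => ⟨⟨Set.mem_insert_of_mem _ ⟨n, rfl⟩, hs2 n⟩, hM n⟩
      obtain ⟨a, ha, φ, hφ, hφt⟩ := hC.tendsto_subseq hmem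
      have h1 : Tendsto (fun n => (s1seq (φ n), s2seq (φ n)).1) atTop (𝓝 a.1) :=
        (continuous_fst.tendsto a).comp hφt
      have h1' : Tendsto (fun n => s1seq (φ n)) atTop (𝓝 s1) :=
        hs1.comp hφ.tendsto_atTop
      have ha1 : a.1 = s1 := tendsto_nhds_unique h1 h1'
      refine ⟨a.2, by rw [← ha1]; exact ha.1.2, ?_⟩
      have h2 : Tendsto (fun n => s2seq (φ n)) atTop (𝓝 a.2) :=
        (continuous_snd.tendsto a).comp hφt
      exact MapClusterPt.of_comp hφ.tendsto_atTop h2.mapClusterPt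
  · rintro ⟨hlsc, hii⟩ K hKne hK lam
    apply IsSeqCompact.isCompact
    intro x hx
    have hx' : ∀ n, x n ∈ {q : S1 × S2 |
        (q.1 ∈ K ∧ q.2 ∈ Φ q.1) ∧ u q ≤ (lam : EReal)} := fun n => by
      have := hx n; exact ⟨this.1, this.2⟩
    obtain ⟨s1, hs1K, φ, hφ, hφt⟩ := hK.tendsto_subseq (fun n => (hx' n).1.1)
    obtain ⟨s2, hs2Φ, hcl⟩ := hii (fun n => (x (φ n)).1) s1 hφt
      (fun n => (x (φ n)).2) (fun n => (hx' (φ n)).1.2)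
      ⟨lam, fun n => (hx' (φ n)).2⟩
    obtain ⟨ψ, hψ, hψt⟩ := TopologicalSpace.FirstCountableTopology.tendsto_subseq hcl
    have h1 : Tendsto (fun n => (x (φ (ψ n))).1) atTop (𝓝 s1) :=
      hφt.comp hψ.tendsto_atTop
    have hxt : Tendsto (fun n => x (φ (ψ n))) atTop (𝓝 (s1, s2)) :=
      (Tendsto.prodMk_nhds h1 hψt).congr (fun n => rfl)
    refine ⟨(s1, s2), ⟨⟨⟨hs1K, hs2Φ⟩, ?_⟩, φ ∘ ψ, hφ.comp hψ, hxt⟩⟩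
    -- u (s1, s2) ≤ lam by lower semicontinuity
    by_contra hgt
    rw [not_le] at hgt
    have hev := hlsc (s1, s2) hs2Φ (lam : EReal) hgt
    have hxtW : Tendsto (fun n => x (φ (ψ n))) atTop
        (𝓝[{p : S1 × S2 | p.2 ∈ Φ p.1}] (s1, s2)) := by
      rw [tendsto_nhdsWithin_iff]
      exact ⟨hxt, Eventually.of_forall fun n => (hx' (φ (ψ n))).1.2⟩
    have := (hxtW.eventually hev).exists
    obtain ⟨n, hn⟩ := this
    exact absurd (hx' (φ (ψ n))).2 (not_le.2 hn)
end

section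
/- Let h : ℝ → [0,∞) be a convex function with h(x) → +∞ as |x| → ∞, let c̄ > 0 be a constant, and let D be a nonnegative random variable with P(D > 0) > 0 and E h(x−D) < ∞ for all x ∈ ℝ. By convexity, the limit lim_{x→−∞} h(x)/x exists in [−∞,0]; define k_h := −lim_{x→−∞} h(x)/x ∈ (0,+∞] and α* := 1 − k_h/c̄ ∈ [−∞,1). Then Assumption GB holds, i.e., there exist z < y in ℝ with (E[h(y−D)] − E[h(z−D)])/(y−z) < −c̄, if and only if α* < 0, equivalently if and only if lim_{x→−∞} h(x)/x < −c̄ (in the extended reals). -/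
open Filter Topology Set MeasureTheory

/-- Assumption GB: there exist `z < y` with
`(E[h(y−D)] − E[h(z−D)])/(y−z) < −c̄`. -/
def AssumptionGB (h : ℝ → ℝ) (cbar : ℝ) (μ : Measure ℝ) : Prop :=
  ∃ z y : ℝ, z < y ∧
    ((∫ s, h (y - s) ∂μ) - (∫ s, h (z - s) ∂μ)) / (y - z) < -cbar

private lemma tendsto_const_div_atBot' (C : ℝ) :
    Tendsto (fun x : ℝ => C / x) atBot (𝓝 0) := by
  have h1 : Tendsto (fun x : ℝ => -x) atBot atTop := tendsto_neg_atBot_atTop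
  have h2 := h1.const_div_atTop C
  have h3 := h2.neg
  rw [neg_zero] at h3
  refine h3.congr fun x => ?_
  rw [div_neg, neg_neg]

private lemma tendsto_slope_atBot (h : ℝ → ℝ) (b l : ℝ)
    (hl : Tendsto (fun x => h x / x) atBot (𝓝 l)) :
    Tendsto (fun t => (h t - h b) / (t - b)) atBot (𝓝 l) := by
  have h1 : Tendsto (fun t : ℝ => t - b) atBot atBot :=
    tendsto_atBot_add_const_right _ _ tendsto_id
  have hb : Tendsto (fun t : ℝ => h b / (t - b)) atBot (𝓝 0) :=
    (tendsto_const_div_atBot' (h b)).comp h1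
  have hb' : Tendsto (fun t : ℝ => b / (t - b)) atBot (𝓝 0) :=
    (tendsto_const_div_atBot' b).comp h1
  have h4 : Tendsto (fun t : ℝ => 1 + b / (t - b)) atBot (𝓝 1) := by
    simpa using tendsto_const_nhds.add hb'
  have h5 : Tendsto (fun t : ℝ => t / (t - b)) atBot (𝓝 1) := by
    refine h4.congr' ?_
    filter_upwards [eventually_lt_atBot b] with t ht
    have htb : t - b ≠ 0 := by intro hc; exact absurd (by linarith : t = b) ht.ne
    field_simp
    ring
  have h6 : Tendsto (fun t : ℝ => h t / t * (t / (t - b)) - h b / (t - b)) atBot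
      (𝓝 (l * 1 - 0)) := (hl.mul h5).sub hb
  rw [mul_one, sub_zero] at h6
  refine h6.congr' ?_
  filter_upwards [eventually_lt_atBot (min b 0)] with t ht
  have ht0 : t ≠ 0 := ne_of_lt (lt_of_lt_of_le ht (min_le_right _ _))
  have htb : t - b ≠ 0 := by
    have : t < b := lt_of_lt_of_le ht (min_le_left _ _)
    intro hc; exact absurd (by linarith : t = b) this.ne
  field_simp

/-- For the classic periodic-review inventory problem with convex holding/backordering cost
`h`, per-unit ordering cost `c̄ > 0`, and nonnegative demand `D` with `P(D>0) > 0` and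
`E h(x−D) < ∞` for all `x`: by convexity the limit `L = lim_{x→−∞} h(x)/x` exists in
`[−∞,0]`; with `k_h := −L ∈ (0,+∞]` and `α* := 1 − k_h/c̄ ∈ [−∞,1)`, Assumption GB holds
if and only if `α* < 0`, equivalently if and only if `L < −c̄` in the extended reals. -/
theorem stmt10 (h : ℝ → ℝ) (hconv : ConvexOn ℝ Set.univ h) (hpos : ∀ x, 0 ≤ h x)
    (hatTop : Tendsto h atTop atTop) (hatBot : Tendsto h atBot atTop)
    (cbar : ℝ) (hc : 0 < cbar)
    (μ : Measure ℝ) [IsProbabilityMeasure μ]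
    (hD0 : μ (Set.Iio 0) = 0) (hDpos : 0 < μ (Set.Ioi 0))
    (hint : ∀ x : ℝ, Integrable (fun s => h (x - s)) μ)
    (L : EReal) (hL : Tendsto (fun x => ((h x / x : ℝ) : EReal)) atBot (nhds L)) :
    L ≤ 0 ∧ 0 < -L ∧
    (AssumptionGB h cbar μ ↔ (1 : EReal) - (-L) / ((cbar : ℝ) : EReal) < 0) ∧
    (AssumptionGB h cbar μ ↔ L < ((-cbar : ℝ) : EReal)) := by
  have haeD : ∀ᵐ s ∂μ, 0 ≤ s := by
    rw [ae_iff]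
    simp only [not_le]; exact hD0
  -- a point with negative slope
  obtain ⟨x₁, hx₁lt, hx₁h⟩ : ∃ x₁ : ℝ, x₁ < 0 ∧ h 0 < h x₁ := by
    have h1 : ∀ᶠ x in atBot, h 0 < h x := hatBot.eventually_gt_atTop (h 0)
    have h2 : ∀ᶠ x : ℝ in atBot, x < 0 := eventually_lt_atBot 0
    obtain ⟨x₁, hx⟩ := (h2.and h1).exists
    exact ⟨x₁, hx.1, hx.2⟩
  set s₁ : ℝ := (h 0 - h x₁) / (0 - x₁) with hs₁def
  have hs₁neg : s₁ < 0 := div_neg_of_neg_of_pos (by linarith) (by linarith)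
  have heqs₁ : (h x₁ - h 0) / (x₁ - 0) = s₁ := by
    rw [hs₁def, ← neg_div_neg_eq]
    congr 1 <;> ring
  -- slopes to 0 from below x₁ are ≤ s₁
  have hslope0 : ∀ x : ℝ, x ≤ x₁ → (h x - h 0) / (x - 0) ≤ s₁ := by
    intro x hx
    have h1 := hconv.secant_mono (a := (0 : ℝ)) (x := x) (y := x₁)
      (mem_univ _) (mem_univ _) (mem_univ _)
      (by intro hc'; exact absurd hc' (by linarith)) (by linarith) hx
    linarith [heqs₁ ▸ h1]
  have hev1 : ∀ᶠ x : ℝ in atBot, h x / x ≤ s₁ := by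
    filter_upwards [eventually_le_atBot x₁, eventually_lt_atBot (0 : ℝ)] with x hx hx0
    have h1 := hslope0 x hx
    have h2 : h x / x = (h x - h 0) / (x - 0) + h 0 / x := by ring
    have h3 : h 0 / x ≤ 0 := div_nonpos_of_nonneg_of_nonpos (hpos 0) hx0.le
    linarith
  have hLs₁ : L ≤ (s₁ : EReal) := by
    apply le_of_tendsto hL
    filter_upwards [hev1] with x hx
    exact_mod_cast hx
  have hL0 : L ≤ 0 := hLs₁.trans (by exact_mod_cast hs₁neg.le)
  have hLneg : L < 0 := lt_of_le_of_lt hLs₁ (by exact_mod_cast hs₁neg)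
  have hnegL : 0 < -L := by
    have := EReal.neg_lt_neg_iff.mpr hLneg
    simpa using this
  set H : ℝ → ℝ := fun x => ∫ s, h (x - s) ∂μ with hHdef
  have hHnn : ∀ x, 0 ≤ H x := fun x => integral_nonneg fun s => hpos _
  -- the main equivalence
  have main : AssumptionGB h cbar μ ↔ L < ((-cbar : ℝ) : EReal) := by
    constructor
    · intro hGB
      by_contra hnot
      push_neg at hnot
      have hLnetop : L ≠ ⊤ := ne_top_of_le_ne_top (EReal.coe_ne_top s₁) hLs₁
      have hLnebot : L ≠ ⊥ := fun hc' => by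
        rw [hc'] at hnot
        exact absurd hnot (by simp)
      lift L to ℝ using ⟨hLnetop, hLnebot⟩ with l
      have hlc : -cbar ≤ l := by exact_mod_cast hnot
      have hLreal : Tendsto (fun x => h x / x) atBot (𝓝 l) := by
        rwa [EReal.tendsto_coe] at hL
      -- all slopes of h are at least l
      have hslope_ge : ∀ a b : ℝ, a < b → l ≤ (h b - h a) / (b - a) := by
        intro a b hab
        have hφ := tendsto_slope_atBot h b l hLreal
        refine le_of_tendsto hφ ?_
        filter_upwards [eventually_lt_atBot a] with t ht
        have h1 := hconv.secant_mono (a := b) (x := t) (y := a)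
          (mem_univ _) (mem_univ _) (mem_univ _)
          (by intro hc'; exact absurd hc' (by linarith)) hab.ne ht.le
        have heq : (h a - h b) / (a - b) = (h b - h a) / (b - a) := by
          rw [← neg_div_neg_eq]; congr 1 <;> ring
        linarith [heq ▸ h1]
      -- the demand is integrable
      have key1 : ∀ s : ℝ, 0 ≤ s → s ≤ (h (x₁ - s) - h x₁) / (-s₁) := by
        intro s hs
        rcases eq_or_lt_of_le hs with hs0 | hs0
        · simp [← hs0]
        · have h1 := hconv.slope_mono_adjacent (mem_univ (x₁ - s)) (mem_univ (0 : ℝ))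
            (by linarith) hx₁lt
          have h2 : (h x₁ - h (x₁ - s)) / s ≤ s₁ := by
            have e : x₁ - (x₁ - s) = s := by ring
            rw [e] at h1
            exact h1
          have h3 : h x₁ - h (x₁ - s) ≤ s₁ * s := by
            have := (div_le_iff₀ hs0).mp h2
            linarith
          rw [le_div_iff₀ (by linarith : (0 : ℝ) < -s₁)]
          nlinarith
      have hDint : Integrable (fun s : ℝ => s) μ := by
        refine Integrable.mono' (g := fun s => (h (x₁ - s) - h x₁) / (-s₁))
          (((hint x₁).sub (integrable_const _)).div_const _) aestronglyMeasurable_id ?_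
        filter_upwards [haeD] with s hs
        rw [Real.norm_eq_abs, abs_of_nonneg hs]
        exact key1 s hs
      set d : ℝ := ∫ s, s ∂μ with hddef
      have hH_le : ∀ x : ℝ, H x ≤ h x - l * d := by
        intro x
        have hpt : ∀ᵐ s ∂μ, h (x - s) ≤ h x - l * s := by
          filter_upwards [haeD] with s hs
          rcases eq_or_lt_of_le hs with hs0 | hs0
          · simp [← hs0]
          · have h1 := hslope_ge (x - s) x (by linarith)
            have h2 : l ≤ (h x - h (x - s)) / s := by
              have e : x - (x - s) = s := by ring
              rw [e] at h1
              exact h1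
            have h3 := (le_div_iff₀ hs0).mp h2
            nlinarith
        have hcalc : (∫ s, (h x - l * s) ∂μ) = h x - l * d := by
          rw [integral_sub (integrable_const _) (hDint.const_mul l),
            integral_const, integral_const_mul]
          simp [hddef]
        calc H x ≤ ∫ s, (h x - l * s) ∂μ :=
              integral_mono_ae (hint x) ((integrable_const _).sub (hDint.const_mul l)) hpt
          _ = h x - l * d := hcalc
      obtain ⟨z, y, hzy, hS⟩ := hGB
      set S : ℝ := ((∫ s, h (y - s) ∂μ) - (∫ s, h (z - s) ∂μ)) / (y - z) with hSdef
      have hHslope : ∀ x : ℝ, x < z → (H z - H x) / (z - x) ≤ S := by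
        intro x hx
        have hpt : ∀ s : ℝ,
            (h (z - s) - h (x - s)) / (z - x) ≤ (h (y - s) - h (z - s)) / (y - z) := by
          intro s
          have h1 := hconv.slope_mono_adjacent (mem_univ (x - s)) (mem_univ (y - s))
            (by linarith : x - s < z - s) (by linarith : z - s < y - s)
          have e1 : z - s - (x - s) = z - x := by ring
          have e2 : y - s - (z - s) = y - z := by ring
          rwa [e1, e2] at h1
        have hi1 : Integrable (fun s => (h (z - s) - h (x - s)) / (z - x)) μ :=
          ((hint z).sub (hint x)).div_const _
        have hi2 : Integrable (fun s => (h (y - s) - h (z - s)) / (y - z)) μ :=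
          ((hint y).sub (hint z)).div_const _
        calc (H z - H x) / (z - x)
            = ∫ s, (h (z - s) - h (x - s)) / (z - x) ∂μ := by
              rw [integral_div, integral_sub (hint z) (hint x)]
          _ ≤ ∫ s, (h (y - s) - h (z - s)) / (y - z) ∂μ := integral_mono hi1 hi2 hpt
          _ = S := by
              rw [integral_div, integral_sub (hint y) (hint z)]
      have hCbound : ∀ x : ℝ, x < z → S * x + (H z - S * z + l * d) ≤ h x := by
        intro x hx
        have h1 := hHslope x hx
        have h2 : H z - H x ≤ S * (z - x) := by
          have := (div_le_iff₀ (by linarith : (0 : ℝ) < z - x)).mp h1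
          linarith
        have h3 := hH_le x
        nlinarith
      have hlS : l ≤ S := by
        have htend : Tendsto (fun x : ℝ => S + (H z - S * z + l * d) / x) atBot (𝓝 (S + 0)) :=
          tendsto_const_nhds.add (tendsto_const_div_atBot' _)
        rw [add_zero] at htend
        refine le_of_tendsto_of_tendsto hLreal htend ?_
        filter_upwards [eventually_lt_atBot (min z 0)] with x hx
        have hx0 : x < 0 := lt_of_lt_of_le hx (min_le_right _ _)
        have hxz : x < z := lt_of_lt_of_le hx (min_le_left _ _)
        have h1 := hCbound x hxz
        have h2 : (S + (H z - S * z + l * d) / x) * x = S * x + (H z - S * z + l * d) := by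
          field_simp [hx0.ne]
        show h x / x ≤ S + (H z - S * z + l * d) / x
        rw [div_le_iff_of_neg hx0, h2]
        exact h1
      have hS' : S < -cbar := hS
      linarith
    · intro hLlt
      obtain ⟨r, hLr, hrc⟩ := EReal.exists_between_coe_real hLlt
      have hrc' : r < -cbar := by exact_mod_cast hrc
      have hev : ∀ᶠ x : ℝ in atBot, h x / x < r := by
        have h1 := hL.eventually_lt_const hLr
        filter_upwards [h1] with x hx
        exact_mod_cast hx
      obtain ⟨X₀, hX₀⟩ := eventually_atBot.mp hev
      set X : ℝ := min X₀ (-1) with hXdef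
      have hX0 : X < 0 := lt_of_le_of_lt (min_le_right _ _) (by norm_num)
      have hXbound : ∀ x : ℝ, x ≤ X → r * x < h x := by
        intro x hx
        have h1 : h x / x < r := hX₀ x (le_trans hx (min_le_left _ _))
        have hx0 : x < 0 := lt_of_le_of_lt hx hX0
        exact (div_lt_iff_of_neg hx0).mp h1
      have hHz : ∀ z : ℝ, z ≤ X → r * z ≤ H z := by
        intro z hz
        have hpt : ∀ᵐ s ∂μ, r * z ≤ h (z - s) := by
          filter_upwards [haeD] with s hs
          have h1 : z - s ≤ X := by linarith
          have h2 := hXbound (z - s) h1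
          have h3 : r * s ≤ 0 := mul_nonpos_of_nonpos_of_nonneg (by linarith) hs
          nlinarith
        have hconst : (∫ _, r * z ∂μ) = r * z := by
          rw [integral_const]
          simp
        calc r * z = ∫ _, r * z ∂μ := hconst.symm
          _ ≤ H z := integral_mono_ae (integrable_const _) (hint z) hpt
      have hcr : cbar + r < 0 := by linarith
      set z : ℝ := min X ((H 0 + 1) / (cbar + r)) with hzdef
      have hz1 : z ≤ X := min_le_left _ _
      have hz0 : z < 0 := lt_of_le_of_lt hz1 hX0
      have hz2 : H 0 + 1 ≤ (cbar + r) * z := by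
        have h1 : z ≤ (H 0 + 1) / (cbar + r) := min_le_right _ _
        have h2 := (le_div_iff_of_neg hcr).mp h1
        linarith [h2, mul_comm z (cbar + r)]
      refine ⟨z, 0, hz0, ?_⟩
      show (H 0 - H z) / (0 - z) < -cbar
      have h1 := hHz z hz1
      rw [div_lt_iff₀ (by linarith : (0 : ℝ) < 0 - z)]
      nlinarith
  -- the alpha-star equivalence
  have alpha_iff : ((1 : EReal) - (-L) / ((cbar : ℝ) : EReal) < 0) ↔
      (L < ((-cbar : ℝ) : EReal)) := by
    by_cases hbot : L = ⊥
    · rw [hbot]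
      have h1 : -(⊥ : EReal) = ⊤ := by simp
      have h2 : (⊤ : EReal) / ((cbar : ℝ) : EReal) = ⊤ :=
        EReal.top_div_of_pos_ne_top (by exact_mod_cast hc) (EReal.coe_ne_top _)
      rw [h1, h2, EReal.sub_top]
      exact iff_of_true (by exact_mod_cast EReal.bot_lt_coe (0 : ℝ)) (EReal.bot_lt_coe _)
    · have hLnetop : L ≠ ⊤ := ne_top_of_le_ne_top (EReal.coe_ne_top s₁) hLs₁
      lift L to ℝ using ⟨hLnetop, hbot⟩ with l
      rw [← EReal.coe_neg, ← EReal.coe_div, show (1 : EReal) = ((1 : ℝ) : EReal) by norm_cast,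
        ← EReal.coe_sub, show (0 : EReal) = ((0 : ℝ) : EReal) by norm_cast,
        EReal.coe_lt_coe_iff, EReal.coe_lt_coe_iff]
      rw [sub_neg, lt_div_iff₀ hc, one_mul]
      constructor <;> intro <;> linarith
  exact ⟨hL0, hnegL, main.trans alpha_iff.symm, main⟩
end

section
/- Let X and Y be metric spaces (Borel subsets of Polish spaces), let A be a metric space, and let P(X) denote the space of Borel probability measures on X endowed with the topology of weak convergence. Let P(dx'|x,a) be a transition probability from X×A to X that is weakly continuous, and let Q(dy|a,x) be a transition probability from A×X to Y that is continuous in total variation. Define R'(C|z,a) := ∫_X ∫_X Q(C|a,x') P(dx'|x,a) z(dx) for Borel C ⊆ Y, z ∈ P(X), a ∈ A. Then the transition probability R' from P(X)×A to Y is setwise continuous: whenever z_n → z weakly in P(X) and a_n → a in A, one has R'(C|z_n,a_n) → R'(C|z,a) for every Borel set C ⊆ Y. -/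
open Filter Topology Set MeasureTheory
open scoped NNReal
open scoped ENNReal BoundedContinuousFunction

/-- A `ProbabilityMeasure`-valued map is continuous in total variation if convergence of the
arguments implies convergence to `0` of the total variation distance
`‖μ − ν‖ = 2 sup_{C Borel} |μ(C) − ν(C)|`. -/
def TVContinuous {E Y : Type*} [TopologicalSpace E] [MetricSpace Y] [MeasurableSpace Y]
    (Q : E → ProbabilityMeasure Y) : Prop :=
  ∀ (e : ℕ → E) (e0 : E), Tendsto e atTop (nhds e0) →
    Tendsto (fun n => 2 * ⨆ C : {C : Set Y // MeasurableSet C},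
      |((Q (e n)) C.1 : ℝ) - ((Q e0) C.1 : ℝ)|) atTop (nhds 0)

noncomputable def bcf01 {X : Type*} [MetricSpace X] (f : X → ℝ) (hf : Continuous f)
    (h0 : ∀ x, 0 ≤ f x) (h1 : ∀ x, f x ≤ 1) : X →ᵇ ℝ :=
  BoundedContinuousFunction.mkOfBound ⟨f, hf⟩ 1 (fun x y => by
    have := h0 x; have := h1 x; have := h0 y; have := h1 y
    rw [Real.dist_eq, abs_le]
    constructor <;> simp only [ContinuousMap.coe_mk] <;> linarith)

lemma integrable01 {X : Type*} [MetricSpace X] [MeasurableSpace X] [BorelSpace X]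
    (f : X → ℝ) (hf : Continuous f) (h0 : ∀ x, 0 ≤ f x) (h1 : ∀ x, f x ≤ 1)
    (ν : Measure X) [IsFiniteMeasure ν] : Integrable f ν :=
  (bcf01 f hf h0 h1).integrable ν

/-- Key lemma: if `μₙ → μ` weakly, `aₙ → a`, and `g : X × A → ℝ` is jointly continuous with
values in `[0,1]`, then `∫ g(x,aₙ) dμₙ → ∫ g(x,a) dμ`. -/
lemma lemL {X A : Type*} [MetricSpace X] [MeasurableSpace X] [BorelSpace X] [MetricSpace A]
    (g : X → A → ℝ) (hg : Continuous (fun p : X × A => g p.1 p.2))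
    (hg0 : ∀ x b, 0 ≤ g x b) (hg1 : ∀ x b, g x b ≤ 1)
    (μs : ℕ → ProbabilityMeasure X) (μ : ProbabilityMeasure X)
    (hμ : Tendsto μs atTop (𝓝 μ)) (as : ℕ → A) (a : A) (ha : Tendsto as atTop (𝓝 a)) :
    Tendsto (fun n => ∫ x, g x (as n) ∂(μs n : Measure X)) atTop
      (𝓝 (∫ x, g x a ∂(μ : Measure X))) := by
  have hcb : ∀ b : A, Continuous (fun x => g x b) := fun b =>
    hg.comp (continuous_id.prodMk continuous_const)
  have hint : ∀ (b : A) (ν : ProbabilityMeasure X),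
      Integrable (fun x => g x b) (ν : Measure X) := fun b ν =>
    integrable01 _ (hcb b) (fun x => hg0 x b) (fun x => hg1 x b) _
  have h2 : Tendsto (fun n => ∫ x, g x a ∂(μs n : Measure X)) atTop
      (𝓝 (∫ x, g x a ∂(μ : Measure X))) :=
    ProbabilityMeasure.tendsto_iff_forall_integral_tendsto.mp hμ
      (bcf01 _ (hcb a) (fun x => hg0 x a) (fun x => hg1 x a))
  have h1 : Tendsto (fun n => ∫ x, (g x (as n) - g x a) ∂(μs n : Measure X)) atTop (𝓝 0) := by
    rw [NormedAddCommGroup.tendsto_nhds_zero]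
    intro ε hε
    set ε' : ℝ := min (ε / 3) (1 / 3) with hε'def
    have hε' : 0 < ε' := lt_min (by linarith) (by norm_num)
    have hε'ε : 2 * ε' ≤ 2 * (ε / 3) := by
      have := min_le_left (ε / 3) (1 / 3); linarith
    -- the graded open sets on which `g(·,b)` is uniformly close to `g(·,a)` for `b` near `a`
    set U : ℕ → Set X := fun m => {x | ∃ δ > (1 : ℝ) / (m + 1),
      ∀ y b, dist y x < δ → dist b a < δ → dist (g y b) (g y a) < ε'} with hUdef
    have hUopen : ∀ m, IsOpen (U m) := by
      intro m
      rw [Metric.isOpen_iff]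
      rintro x ⟨δ, hδ, hx⟩
      have hm0 : (0 : ℝ) < 1 / (m + 1) := by positivity
      refine ⟨(δ - 1 / (m + 1)) / 2, by linarith, ?_⟩
      intro x₂ hx₂
      rw [Metric.mem_ball] at hx₂
      refine ⟨(δ + 1 / (m + 1)) / 2, by linarith, ?_⟩
      intro y b hy hb
      have hyx : dist y x < δ := by
        calc dist y x ≤ dist y x₂ + dist x₂ x := dist_triangle _ _ _
          _ < (δ + 1 / (m + 1)) / 2 + (δ - 1 / (m + 1)) / 2 := by linarith
          _ = δ := by ring
      exact hx y b hyx (by linarith)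
    have hUcover : ∀ x : X, ∃ m, x ∈ U m := by
      intro x
      have hc : ContinuousAt (fun p : X × A => g p.1 p.2) (x, a) := hg.continuousAt
      rw [Metric.continuousAt_iff] at hc
      obtain ⟨δ, hδ, hδ'⟩ := hc (ε' / 2) (by linarith)
      obtain ⟨m, hm⟩ := exists_nat_one_div_lt hδ
      refine ⟨m, δ, hm, ?_⟩
      intro y b hy hb
      have hb1 : dist ((y, b) : X × A) (x, a) < δ := by
        rw [Prod.dist_eq]; exact max_lt hy hb
      have hb2 : dist ((y, a) : X × A) (x, a) < δ := by
        rw [Prod.dist_eq]; simp only [dist_self]; exact max_lt hy hδ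
      have k1 := hδ' hb1
      have k2 := hδ' hb2
      calc dist (g y b) (g y a) ≤ dist (g y b) (g x a) + dist (g x a) (g y a) :=
            dist_triangle _ _ _
        _ < ε' / 2 + ε' / 2 := by rw [dist_comm (g x a)] at *; exact add_lt_add k1 k2
        _ = ε' := by ring
    have hUmono : Monotone U := by
      intro m m' hmm x hx
      obtain ⟨δ, hδ, hx⟩ := hx
      refine ⟨δ, lt_of_le_of_lt ?_ hδ, hx⟩
      apply one_div_le_one_div_of_le (by positivity)
      have : (m : ℝ) ≤ (m' : ℝ) := Nat.cast_le.mpr hmm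
      linarith
    have hμU : Tendsto (fun m => (μ : Measure X) (U m)) atTop
        (𝓝 ((μ : Measure X) (⋃ m, U m))) := tendsto_measure_iUnion_atTop hUmono
    have hUuniv : (⋃ m, U m) = univ := by
      rw [eq_univ_iff_forall]
      intro x
      rw [mem_iUnion]
      exact hUcover x
    rw [hUuniv, measure_univ] at hμU
    set εe : ℝ≥0∞ := ENNReal.ofReal ε' with hεedef
    have hεe0 : εe ≠ 0 := by
      simp only [hεedef, ne_eq, ENNReal.ofReal_eq_zero, not_le]; exact hε'
    have hlt1 : (1 : ℝ≥0∞) - εe < 1 :=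
      ENNReal.sub_lt_self ENNReal.one_ne_top one_ne_zero hεe0
    obtain ⟨m, hm⟩ := (hμU.eventually (eventually_gt_nhds hlt1)).exists
    -- portmanteau
    have hport : (μ : Measure X) (U m) ≤ atTop.liminf fun n => (μs n : Measure X) (U m) :=
      ProbabilityMeasure.le_liminf_measure_open_of_tendsto hμ (hUopen m)
    have hev1 : ∀ᶠ n in atTop, (1 : ℝ≥0∞) - εe < (μs n : Measure X) (U m) :=
      eventually_lt_of_lt_liminf (lt_of_lt_of_le hm hport)
    have hm0 : (0 : ℝ) < 1 / (m + 1) := by positivity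
    have hev2 : ∀ᶠ n in atTop, dist (as n) a < 1 / (m + 1) :=
      (Metric.tendsto_nhds.mp ha) _ hm0
    filter_upwards [hev1, hev2] with n hn1 hn2
    -- pointwise bound
    have hmeas : MeasurableSet ((U m)ᶜ) := (hUopen m).measurableSet.compl
    have hptwise : ∀ x : X, |g x (as n) - g x a| ≤
        ε' + ((U m)ᶜ).indicator (fun _ => (1 : ℝ)) x := by
      intro x
      by_cases hx : x ∈ U m
      · have hx2 := hx
        obtain ⟨δ, hδ, hxδ⟩ := hx2
        have : dist (g x (as n)) (g x a) < ε' :=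
          hxδ x (as n) (by rw [dist_self]; linarith) (lt_trans hn2 hδ)
        rw [Real.dist_eq] at this
        have hind : ((U m)ᶜ).indicator (fun _ => (1 : ℝ)) x = 0 :=
          indicator_of_notMem (by simp [hx]) _
        rw [hind]; linarith
      · have hind : ((U m)ᶜ).indicator (fun _ => (1 : ℝ)) x = 1 :=
          indicator_of_mem (by simpa using hx) _
        rw [hind]
        have h1 := hg0 x (as n); have h2 := hg1 x (as n)
        have h3 := hg0 x a; have h4 := hg1 x a
        rw [abs_le]; constructor <;> linarith
    have hintdiff : Integrable (fun x => g x (as n) - g x a) ((μs n : Measure X)) :=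
      (hint (as n) (μs n)).sub (hint a (μs n))
    have hintrhs : Integrable (fun x => ε' + ((U m)ᶜ).indicator (fun _ => (1 : ℝ)) x)
        ((μs n : Measure X)) :=
      (integrable_const ε').add ((integrable_const (1 : ℝ)).indicator hmeas)
    have hb1 : ‖∫ x, (g x (as n) - g x a) ∂(μs n : Measure X)‖ ≤
        ∫ x, |g x (as n) - g x a| ∂(μs n : Measure X) := by
      simpa [Real.norm_eq_abs] using
        norm_integral_le_integral_norm (μ := (μs n : Measure X)) (fun x => g x (as n) - g x a)
    have hb2 : ∫ x, |g x (as n) - g x a| ∂(μs n : Measure X) ≤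
        ∫ x, (ε' + ((U m)ᶜ).indicator (fun _ => (1 : ℝ)) x) ∂(μs n : Measure X) :=
      integral_mono hintdiff.abs hintrhs hptwise
    have hb3 : ∫ x, (ε' + ((U m)ᶜ).indicator (fun _ => (1 : ℝ)) x) ∂(μs n : Measure X) =
        ε' + ((μs n : Measure X) ((U m)ᶜ)).toReal := by
      rw [integral_add (integrable_const ε') ((integrable_const (1 : ℝ)).indicator hmeas)]
      rw [integral_const, integral_indicator_const _ hmeas]
      simp
      rfl
    -- bound the measure of the complement
    have hcompl : ((μs n : Measure X) ((U m)ᶜ)).toReal ≤ ε' := by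
      have hc : (μs n : Measure X) ((U m)ᶜ) ≤ εe := by
        have h1' : (μs n : Measure X) ((U m)ᶜ) =
            1 - (μs n : Measure X) (U m) := by
          rw [measure_compl (hUopen m).measurableSet (measure_ne_top _ _), measure_univ]
        rw [h1', tsub_le_iff_right]
        have hn1' : (1 : ℝ≥0∞) - εe ≤ (μs n : Measure X) (U m) := hn1.le
        rw [tsub_le_iff_right] at hn1'
        calc (1 : ℝ≥0∞) ≤ (μs n : Measure X) (U m) + εe := hn1'
          _ = εe + (μs n : Measure X) (U m) := add_comm _ _
      calc ((μs n : Measure X) ((U m)ᶜ)).toReal ≤ εe.toReal :=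
            ENNReal.toReal_mono ENNReal.ofReal_ne_top hc
        _ = ε' := ENNReal.toReal_ofReal hε'.le
    calc ‖∫ x, (g x (as n) - g x a) ∂(μs n : Measure X)‖ ≤
          ε' + ((μs n : Measure X) ((U m)ᶜ)).toReal := by
            rw [← hb3]; exact le_trans hb1 hb2
      _ ≤ ε' + ε' := by linarith
      _ < ε := by linarith
  have key := h1.add h2
  rw [zero_add] at key
  convert key using 2 with n
  rw [integral_sub (hint (as n) (μs n)) (hint a (μs n))]
  ring

/-- If the transition probability `P` from `X × A` to `X` is weakly continuous and the
transition probability `Q` from `A × X` to `Y` is continuous in total variation, then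
`R'(C|z,a) = ∫_X ∫_X Q(C|a,x') P(dx'|x,a) z(dx)` is setwise continuous: whenever
`zₙ → z` weakly and `aₙ → a`, `R'(C|zₙ,aₙ) → R'(C|z,a)` for every Borel set `C ⊆ Y`. -/
theorem stmt11 {X Y A : Type*}
    [MetricSpace X] [MeasurableSpace X] [BorelSpace X]
    [MetricSpace Y] [MeasurableSpace Y] [BorelSpace Y]
    [MetricSpace A]
    (P : X × A → ProbabilityMeasure X) (hP : Continuous P)
    (Q : A × X → ProbabilityMeasure Y) (hQ : TVContinuous Q) :
    ∀ (zs : ℕ → ProbabilityMeasure X) (as : ℕ → A)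
      (z : ProbabilityMeasure X) (a : A),
      Tendsto zs atTop (nhds z) → Tendsto as atTop (nhds a) →
      ∀ C : Set Y, MeasurableSet C →
        Tendsto (fun n => ∫ x, ∫ x', ((Q (as n, x')) C : ℝ)
            ∂(P (x, as n) : Measure X) ∂(zs n : Measure X)) atTop
          (nhds (∫ x, ∫ x', ((Q (a, x')) C : ℝ)
            ∂(P (x, a) : Measure X) ∂(z : Measure X))) := by
  intro zs as z a hz ha C hC
  -- the function `q(b,x') := Q(C | b, x')` is continuous (from TV-continuity)
  have hq0 : ∀ p : A × X, (0 : ℝ) ≤ ((Q p) C : ℝ) := fun p => (Q p C).coe_nonneg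
  have hq1 : ∀ p : A × X, ((Q p) C : ℝ) ≤ 1 := fun p => by
    exact_mod_cast (Q p).apply_le_one C
  have hqcont : Continuous (fun p : A × X => ((Q p) C : ℝ)) := by
    apply SeqContinuous.continuous
    intro e p he
    rw [tendsto_iff_norm_sub_tendsto_zero]
    have hbdd : ∀ n, BddAbove (range fun C' : {C : Set Y // MeasurableSet C} =>
        |((Q (e n)) C'.1 : ℝ) - ((Q p) C'.1 : ℝ)|) := by
      intro n
      refine ⟨2, ?_⟩
      rintro r ⟨C', rfl⟩
      have h1 := hq0 (e n) ; have h2 := hq1 (e n)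
      have a1 : (0:ℝ) ≤ ((Q (e n)) C'.1 : ℝ) := (Q (e n) C'.1).coe_nonneg
      have a2 : ((Q (e n)) C'.1 : ℝ) ≤ 1 := by exact_mod_cast (Q (e n)).apply_le_one C'.1
      have a3 : (0:ℝ) ≤ ((Q p) C'.1 : ℝ) := (Q p C'.1).coe_nonneg
      have a4 : ((Q p) C'.1 : ℝ) ≤ 1 := by exact_mod_cast (Q p).apply_le_one C'.1
      rw [abs_le]; constructor <;> linarith
    have hub : ∀ n, ‖((Q (e n)) C : ℝ) - ((Q p) C : ℝ)‖ ≤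
        2 * ⨆ C' : {C : Set Y // MeasurableSet C},
          |((Q (e n)) C'.1 : ℝ) - ((Q p) C'.1 : ℝ)| := by
      intro n
      have hle : |((Q (e n)) C : ℝ) - ((Q p) C : ℝ)| ≤
          ⨆ C' : {C : Set Y // MeasurableSet C},
            |((Q (e n)) C'.1 : ℝ) - ((Q p) C'.1 : ℝ)| :=
        le_ciSup (hbdd n) ⟨C, hC⟩
      have hnn : (0:ℝ) ≤ ⨆ C' : {C : Set Y // MeasurableSet C},
          |((Q (e n)) C'.1 : ℝ) - ((Q p) C'.1 : ℝ)| := le_trans (abs_nonneg _) hle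
      rw [Real.norm_eq_abs]
      linarith
    exact squeeze_zero (fun n => norm_nonneg _) hub (hQ e p he)
  -- inner integral
  set G : X → A → ℝ := fun x b => ∫ x', ((Q (b, x')) C : ℝ) ∂(P (x, b) : Measure X)
    with hGdef
  have hqint : ∀ (b : A) (ν : Measure X) [IsFiniteMeasure ν],
      Integrable (fun x' => ((Q (b, x')) C : ℝ)) ν := by
    intro b ν _
    exact integrable01 _ (hqcont.comp (continuous_const.prodMk continuous_id))
      (fun x' => hq0 _) (fun x' => hq1 _) ν
  have hG0 : ∀ x b, 0 ≤ G x b := fun x b => integral_nonneg (fun x' => hq0 _)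
  have hG1 : ∀ x b, G x b ≤ 1 := by
    intro x b
    have : G x b ≤ ∫ _, (1 : ℝ) ∂(P (x, b) : Measure X) :=
      integral_mono (hqint b _) (integrable_const 1) (fun x' => hq1 _)
    simpa using this
  have hGcont : Continuous (fun p : X × A => G p.1 p.2) := by
    apply SeqContinuous.continuous
    intro e p he
    have h1 : Tendsto (fun n => P (e n)) atTop (𝓝 (P p)) := (hP.tendsto p).comp he
    have h2 : Tendsto (fun n => (e n).2) atTop (𝓝 p.2) := (continuous_snd.tendsto p).comp he
    have := lemL (fun x' b => ((Q (b, x')) C : ℝ))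
      (hqcont.comp (continuous_snd.prodMk continuous_fst))
      (fun x' b => hq0 _) (fun x' b => hq1 _)
      (fun n => P (e n)) (P p) h1 (fun n => (e n).2) p.2 h2
    simpa [Function.comp_def, hGdef] using this
  have := lemL G hGcont hG0 hG1 zs z hz as a ha
  exact this
end

section
/- Let X and Y be metric spaces (Borel subsets of Polish spaces), let A be a metric space, and let P(X) denote the space of Borel probability measures on X endowed with the topology of weak convergence. If the transition probability P(dx'|x,a) from X×A to X is weakly continuous and the transition probability Q(dy|a,x) from A×X to Y is weakly continuous, then the transition probability R' from P(X)×A to Y defined by R'(C|z,a) := ∫_X ∫_X Q(C|a,x') P(dx'|x,a) z(dx) for Borel C ⊆ Y is weakly continuous: whenever z_n → z weakly in P(X) and a_n → a in A, the measures R'(·|z_n,a_n) converge weakly to R'(·|z,a). -/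
open Filter Topology Set MeasureTheory
open scoped ENNReal NNReal

/-- A continuous function bounded by `M`, bundled. -/
noncomputable def bcfOf {X : Type*} [MetricSpace X] (g : X → ℝ) (hg : Continuous g)
    (M : ℝ) (hb : ∀ x, |g x| ≤ M) : BoundedContinuousFunction X ℝ :=
  BoundedContinuousFunction.ofNormedAddCommGroup g hg M
    (fun x => by rw [Real.norm_eq_abs]; exact hb x)

/-- Continuous convergence + weak convergence: if `μₙ → μ` weakly, `aₙ → a`, and
`h : X × A → ℝ` is jointly continuous and bounded, then
`∫ (h (x, aₙ) - h (x, a)) dμₙ → 0`. -/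
lemma key_aux {X A : Type*} [MetricSpace X] [MeasurableSpace X] [BorelSpace X] [MetricSpace A]
    (h : X × A → ℝ) (hc : Continuous h) (M : ℝ) (hM : 0 ≤ M) (hb : ∀ p, |h p| ≤ M)
    {μs : ℕ → ProbabilityMeasure X} {μ : ProbabilityMeasure X}
    (hμ : Tendsto μs atTop (nhds μ))
    {as : ℕ → A} {a : A} (ha : Tendsto as atTop (nhds a)) :
    Tendsto (fun n => ∫ x, (h (x, as n) - h (x, a)) ∂(μs n : Measure X)) atTop (nhds 0) := by
  rw [NormedAddCommGroup.tendsto_nhds_zero]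
  intro ε hε
  set ε3 : ℝ := ε / (2 + 4 * M) with hε3def
  have hden : (0:ℝ) < 2 + 4 * M := by linarith
  have hε3 : 0 < ε3 := div_pos hε hden
  have hε3mul : ε3 * (2 + 4 * M) = ε := div_mul_cancel₀ _ (ne_of_gt hden)
  -- the increasing family of open sets
  set U : ℕ → Set X := fun k =>
    {x | ∃ δ > 0, ∀ n ≥ k, ∀ y ∈ Metric.ball x δ, |h (y, as n) - h (y, a)| < ε3} with hUdef
  have U_open : ∀ k, IsOpen (U k) := by
    intro k
    rw [Metric.isOpen_iff]
    rintro x ⟨δ, δpos, hδ⟩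
    refine ⟨δ, δpos, fun y hy => ?_⟩
    have hy' : dist y x < δ := Metric.mem_ball.mp hy
    refine ⟨δ - dist y x, by linarith, fun n hn z hz => ?_⟩
    have hz' : dist z y < δ - dist y x := Metric.mem_ball.mp hz
    refine hδ n hn z (Metric.mem_ball.mpr ?_)
    calc dist z x ≤ dist z y + dist y x := dist_triangle _ _ _
      _ < δ := by linarith
  have U_mono : Monotone U := by
    rintro k l hkl x ⟨δ, δpos, hδ⟩
    exact ⟨δ, δpos, fun n hn => hδ n (le_trans hkl hn)⟩
  have U_cover : (⋃ k, U k) = univ := by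
    ext x
    simp only [mem_iUnion, mem_univ, iff_true]
    have hcx : ContinuousAt h (x, a) := hc.continuousAt
    rcases Metric.continuousAt_iff.mp hcx (ε3 / 2) (half_pos hε3) with ⟨δ, δpos, hδ⟩
    rcases Metric.tendsto_atTop.mp ha δ δpos with ⟨N, hN⟩
    refine ⟨N, δ, δpos, fun n hn y hy => ?_⟩
    have hyx : dist y x < δ := Metric.mem_ball.mp hy
    have h1 : dist (y, as n) (x, a) < δ := by
      rw [Prod.dist_eq]; exact max_lt hyx (hN n hn)
    have h2 : dist (y, a) (x, a) < δ := by
      rw [Prod.dist_eq]; exact max_lt hyx (by simpa using δpos)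
    have b1 := hδ h1
    have b2 := hδ h2
    rw [Real.dist_eq] at b1 b2
    calc |h (y, as n) - h (y, a)|
        ≤ |h (y, as n) - h (x, a)| + |h (x, a) - h (y, a)| := abs_sub_le _ _ _
      _ < ε3 / 2 + ε3 / 2 := by
            rw [abs_sub_comm (h (x, a))]; exact add_lt_add b1 b2
      _ = ε3 := add_halves ε3
  -- choose K with μ ((U K)ᶜ) small
  have hFmeas : ∀ k, MeasurableSet (U k)ᶜ := fun k => ((U_open k).measurableSet).compl
  have hFi : (⋂ k, (U k)ᶜ) = (∅ : Set X) := by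
    rw [← compl_iUnion, U_cover, compl_univ]
  have hFtend : Tendsto (fun k => (μ : Measure X) (U k)ᶜ) atTop (nhds 0) := by
    have := tendsto_measure_iInter_atTop (μ := (μ : Measure X))
      (s := fun k => (U k)ᶜ) (fun k => (hFmeas k).nullMeasurableSet)
      (fun k l hkl => compl_subset_compl.mpr (U_mono hkl)) ⟨0, measure_ne_top _ _⟩
    rw [hFi] at this
    simpa [Function.comp_def] using this
  have hε3E : (0:ℝ≥0∞) < ENNReal.ofReal ε3 := ENNReal.ofReal_pos.mpr hε3
  obtain ⟨K, hK⟩ : ∃ K, (μ : Measure X) (U K)ᶜ < ENNReal.ofReal ε3 :=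
    (hFtend.eventually (Iio_mem_nhds hε3E)).exists
  -- portmanteau: eventually μs n ((U K)ᶜ) < ofReal ε3
  have hlimsup : (atTop.limsup fun n => (μs n : Measure X) (U K)ᶜ) ≤ (μ : Measure X) (U K)ᶜ :=
    ProbabilityMeasure.limsup_measure_closed_le_of_tendsto hμ (U_open K).isClosed_compl
  have hev : ∀ᶠ n in atTop, (μs n : Measure X) (U K)ᶜ < ENNReal.ofReal ε3 :=
    eventually_lt_of_limsup_lt (lt_of_le_of_lt hlimsup hK)
  filter_upwards [hev, eventually_ge_atTop K] with n hn hnK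
  -- now bound the integral
  set ν : Measure X := (μs n : Measure X) with hν
  have int1 : Integrable (fun x => h (x, as n)) ν :=
    (bcfOf _ (hc.comp (continuous_id.prodMk continuous_const)) M (fun x => hb _)).integrable ν
  have int2 : Integrable (fun x => h (x, a)) ν :=
    (bcfOf _ (hc.comp (continuous_id.prodMk continuous_const)) M (fun x => hb _)).integrable ν
  have intg : Integrable (fun x => h (x, as n) - h (x, a)) ν := int1.sub int2
  -- dominating function
  set D : X → ℝ := fun x => ε3 + Set.indicator (U K)ᶜ (fun _ => 2 * M) x with hD
  have intD : Integrable D ν :=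
    (integrable_const ε3).add ((integrable_const (2 * M)).indicator (hFmeas K))
  have hpt : ∀ x, ‖h (x, as n) - h (x, a)‖ ≤ D x := by
    intro x
    rw [Real.norm_eq_abs]
    by_cases hx : x ∈ U K
    · obtain ⟨δ, δpos, hδ⟩ := hx
      have : |h (x, as n) - h (x, a)| < ε3 :=
        hδ n hnK x (Metric.mem_ball.mpr (by simpa using δpos))
      have hind : 0 ≤ Set.indicator (U K)ᶜ (fun _ => 2 * M) x :=
        Set.indicator_nonneg (fun _ _ => by linarith) x
      simp only [hD]
      linarith
    · have hxF : x ∈ (U K)ᶜ := hx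
      have : Set.indicator (U K)ᶜ (fun _ => 2 * M) x = 2 * M := Set.indicator_of_mem hxF _
      simp only [hD, this]
      calc |h (x, as n) - h (x, a)| ≤ |h (x, as n)| + |h (x, a)| := abs_sub _ _
        _ ≤ M + M := add_le_add (hb _) (hb _)
        _ ≤ ε3 + 2 * M := by linarith
  have hDval : ∫ x, D x ∂ν = ε3 + (ν (U K)ᶜ).toReal * (2 * M) := by
    rw [hD, integral_add (integrable_const ε3)
      ((integrable_const (2 * M)).indicator (hFmeas K)),
      integral_const, integral_indicator_const _ (hFmeas K)]
    simp [measure_univ, measureReal_def]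
  have hνK : (ν (U K)ᶜ).toReal ≤ ε3 :=
    ENNReal.toReal_le_of_le_ofReal hε3.le hn.le
  calc ‖∫ x, (h (x, as n) - h (x, a)) ∂ν‖
      ≤ ∫ x, ‖h (x, as n) - h (x, a)‖ ∂ν := norm_integral_le_integral_norm _
    _ ≤ ∫ x, D x ∂ν := integral_mono intg.norm intD hpt
    _ = ε3 + (ν (U K)ᶜ).toReal * (2 * M) := hDval
    _ ≤ ε3 + ε3 * (2 * M) := by nlinarith
    _ < ε := by nlinarith

/-- Main key lemma: integrals of a jointly continuous bounded function against weakly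
converging probability measures, with a converging parameter, converge. -/
lemma key_main {X A : Type*} [MetricSpace X] [MeasurableSpace X] [BorelSpace X] [MetricSpace A]
    (h : X × A → ℝ) (hc : Continuous h) (M : ℝ) (hM : 0 ≤ M) (hb : ∀ p, |h p| ≤ M)
    {μs : ℕ → ProbabilityMeasure X} {μ : ProbabilityMeasure X}
    (hμ : Tendsto μs atTop (nhds μ))
    {as : ℕ → A} {a : A} (ha : Tendsto as atTop (nhds a)) :
    Tendsto (fun n => ∫ x, h (x, as n) ∂(μs n : Measure X)) atTop
      (nhds (∫ x, h (x, a) ∂(μ : Measure X))) := by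
  have haux := key_aux h hc M hM hb hμ ha
  have hsec : Tendsto (fun n => ∫ x, h (x, a) ∂(μs n : Measure X)) atTop
      (nhds (∫ x, h (x, a) ∂(μ : Measure X))) := by
    have := ProbabilityMeasure.tendsto_iff_forall_integral_tendsto.mp hμ
      (bcfOf (fun x => h (x, a)) (hc.comp (continuous_id.prodMk continuous_const)) M
        (fun x => hb _))
    simpa [bcfOf] using this
  have := haux.add hsec
  rw [zero_add] at this
  refine this.congr (fun n => ?_)
  have int1 : Integrable (fun x => h (x, as n)) (μs n : Measure X) :=
    (bcfOf _ (hc.comp (continuous_id.prodMk continuous_const)) M (fun x => hb _)).integrable _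
  have int2 : Integrable (fun x => h (x, a)) (μs n : Measure X) :=
    (bcfOf _ (hc.comp (continuous_id.prodMk continuous_const)) M (fun x => hb _)).integrable _
  rw [integral_sub int1 int2]
  ring

/-- If the transition probabilities `P` from `X × A` to `X` and `Q` from `A × X` to `Y` are
weakly continuous, then the transition probability
`R'(dy|z,a) = ∫_X ∫_X Q(dy|a,x') P(dx'|x,a) z(dx)` from `P(X) × A` to `Y` is weakly
continuous: whenever `zₙ → z` weakly and `aₙ → a`, one has
`∫ f dR'(·|zₙ,aₙ) → ∫ f dR'(·|z,a)` for every bounded continuous `f : Y → ℝ`. -/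
theorem stmt13 {X Y A : Type*}
    [MetricSpace X] [MeasurableSpace X] [BorelSpace X]
    [MetricSpace Y] [MeasurableSpace Y] [BorelSpace Y]
    [MetricSpace A]
    (P : X × A → ProbabilityMeasure X) (hP : Continuous P)
    (Q : A × X → ProbabilityMeasure Y) (hQ : Continuous Q) :
    ∀ (zs : ℕ → ProbabilityMeasure X) (as : ℕ → A)
      (z : ProbabilityMeasure X) (a : A),
      Tendsto zs atTop (nhds z) → Tendsto as atTop (nhds a) →
      ∀ f : BoundedContinuousFunction Y ℝ,
        Tendsto (fun n => ∫ x, ∫ x', ∫ y, f y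
            ∂(Q (as n, x') : Measure Y) ∂(P (x, as n) : Measure X) ∂(zs n : Measure X))
          atTop
          (nhds (∫ x, ∫ x', ∫ y, f y
            ∂(Q (a, x') : Measure Y) ∂(P (x, a) : Measure X) ∂(z : Measure X))) := by
  intro zs as z a hz ha f
  -- the inner function
  set φ : A × X → ℝ := fun p => ∫ y, f y ∂(Q p : Measure Y) with hφdef
  have hφc : Continuous φ :=
    (ProbabilityMeasure.continuous_integral_boundedContinuousFunction f).comp hQ
  have hφb : ∀ p, |φ p| ≤ ‖f‖ := by
    intro p
    rw [← Real.norm_eq_abs]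
    calc ‖∫ y, f y ∂(Q p : Measure Y)‖
        ≤ ‖f‖ * ((Q p : Measure Y) univ).toReal :=
          norm_integral_le_of_norm_le_const
            (Eventually.of_forall fun y => f.norm_coe_le_norm y)
      _ = ‖f‖ := by simp [measure_univ]
  -- the middle function
  set G : X × A → ℝ := fun p => ∫ x', φ (p.2, x') ∂(P p : Measure X) with hGdef
  have hGb : ∀ p, |G p| ≤ ‖f‖ := by
    intro p
    rw [← Real.norm_eq_abs]
    calc ‖∫ x', φ (p.2, x') ∂(P p : Measure X)‖
        ≤ ‖f‖ * ((P p : Measure X) univ).toReal :=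
          norm_integral_le_of_norm_le_const
            (Eventually.of_forall fun x' => by rw [Real.norm_eq_abs]; exact hφb _)
      _ = ‖f‖ := by simp [measure_univ]
  have hGc : Continuous G := by
    apply SeqContinuous.continuous
    intro u p hu
    have hPu : Tendsto (fun n => P (u n)) atTop (nhds (P p)) :=
      ((hP.tendsto p).comp hu)
    have hau : Tendsto (fun n => (u n).2) atTop (nhds p.2) :=
      ((continuous_snd.tendsto p).comp hu)
    have := key_main (fun q : X × A => φ (q.2, q.1))
      (hφc.comp (continuous_snd.prodMk continuous_fst)) ‖f‖ (norm_nonneg f)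
      (fun q => hφb _) hPu hau
    exact this
  -- conclude
  have := key_main G hGc ‖f‖ (norm_nonneg f) hGb hz ha
  exact this
end

section
/- Let K ≥ 0 be a fixed ordering cost, c̄ > 0 a per-unit ordering cost, h : ℝ → [0,∞) a convex function with h(0) = 0 and h(x) → +∞ as |x| → ∞, and let μ be a Borel probability measure on [0,∞) (the distribution of the demand D) such that ∫ h(x−s) μ(ds) < ∞ for all x ∈ ℝ. Then the one-step cost function c : ℝ×[0,∞) → ℝ defined by c(x,a) := K·1{a > 0} + c̄·a + ∫ h(x+a−s) μ(ds) is inf-compact on ℝ×[0,∞): for every λ ∈ ℝ the level set {(x,a) ∈ ℝ×[0,∞) : c(x,a) ≤ λ} is compact. -/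
open Filter Topology Set MeasureTheory

/-- In the classic periodic-review inventory model with backorders, with fixed ordering cost
`K ≥ 0`, per-unit ordering cost `c̄ > 0`, convex holding/backordering cost `h ≥ 0` with
`h 0 = 0` and `h(x) → ∞` as `|x| → ∞`, and demand distribution `μ` on `[0,∞)` with
`∫ h(x−s) μ(ds) < ∞` for all `x`, the one-step cost
`c(x,a) = K·1{a>0} + c̄·a + ∫ h(x+a−s) μ(ds)` is inf-compact on `ℝ × [0,∞)`:
all level sets `{(x,a) : a ≥ 0, c(x,a) ≤ λ}`, `λ ∈ ℝ`, are compact. -/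
theorem stmt15 (K cbar : ℝ) (hK : 0 ≤ K) (hc : 0 < cbar)
    (h : ℝ → ℝ) (hconv : ConvexOn ℝ Set.univ h) (hpos : ∀ x, 0 ≤ h x) (h0 : h 0 = 0)
    (hatTop : Tendsto h atTop atTop) (hatBot : Tendsto h atBot atTop)
    (μ : Measure ℝ) [IsProbabilityMeasure μ] (hμ0 : μ (Set.Iio 0) = 0)
    (hint : ∀ x : ℝ, Integrable (fun s => h (x - s)) μ) :
    ∀ lam : ℝ, IsCompact {p : ℝ × ℝ | 0 ≤ p.2 ∧
      (if 0 < p.2 then K else 0) + cbar * p.2 + ∫ s, h (p.1 + p.2 - s) ∂μ ≤ lam} := by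
  intro lam
  -- pick points witnessing growth at ±∞
  obtain ⟨t1, ht1a, ht1b⟩ : ∃ t1 : ℝ, 1 ≤ t1 ∧ 1 ≤ h t1 :=
    ((eventually_ge_atTop (1:ℝ)).and (hatTop.eventually_ge_atTop 1)).exists
  obtain ⟨t2, ht2a, ht2b⟩ : ∃ t2 : ℝ, t2 ≤ -1 ∧ 1 ≤ h t2 :=
    ((eventually_le_atBot (-1:ℝ)).and (hatBot.eventually_ge_atTop 1)).exists
  have ht10 : (0:ℝ) < t1 := by linarith
  have ht20 : t2 < 0 := by linarith
  set α : ℝ := min (1 / t1) (1 / (-t2)) with hαdef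
  set M : ℝ := max t1 (-t2) with hMdef
  set β : ℝ := α * M with hβdef
  have hα : 0 < α := lt_min (one_div_pos.2 ht10) (one_div_pos.2 (by linarith))
  have hM1 : (1:ℝ) ≤ M := le_trans ht1a (le_max_left _ _)
  have hβ : 0 ≤ β := by positivity
  -- slope bounds from convexity
  have slope_pos : ∀ t : ℝ, t1 ≤ t → t / t1 ≤ h t := by
    intro t ht
    have ht0 : 0 < t := lt_of_lt_of_le ht10 ht
    have hb : 0 ≤ t1 / t := by positivity
    have ha : 0 ≤ 1 - t1 / t := by
      have : t1 / t ≤ 1 := (div_le_one ht0).2 ht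
      linarith
    have hab : (1 - t1 / t) + t1 / t = 1 := by ring
    have hcv := hconv.2 (mem_univ (0:ℝ)) (mem_univ t) ha hb hab
    have harg : (1 - t1 / t) • (0:ℝ) + (t1 / t) • t = t1 := by
      simp only [smul_eq_mul, mul_zero, zero_add]
      exact div_mul_cancel₀ t1 ht0.ne'
    rw [harg, h0, smul_eq_mul, smul_eq_mul, mul_zero, zero_add] at hcv
    -- hcv : h t1 ≤ t1 / t * h t
    have h6 : 1 * t ≤ (t1 / t * h t) * t :=
      mul_le_mul_of_nonneg_right (le_trans ht1b hcv) ht0.le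
    have h7 : (t1 / t * h t) * t = t1 * h t := by
      have hx : t1 / t * t = t1 := div_mul_cancel₀ t1 ht0.ne'
      calc (t1 / t * h t) * t = (t1 / t * t) * h t := by ring
        _ = t1 * h t := by rw [hx]
    rw [h7, one_mul] at h6
    rw [div_le_iff₀ ht10]
    linarith
  have slope_neg : ∀ t : ℝ, t ≤ t2 → (-t) / (-t2) ≤ h t := by
    intro t ht
    have ht0 : t < 0 := lt_of_le_of_lt ht ht20
    have hb : 0 ≤ t2 / t := div_nonneg_of_nonpos ht20.le ht0.le
    have hb1 : t2 / t ≤ 1 := by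
      rw [div_le_iff_of_neg ht0]
      linarith
    have ha : 0 ≤ 1 - t2 / t := by linarith
    have hab : (1 - t2 / t) + t2 / t = 1 := by ring
    have hcv := hconv.2 (mem_univ (0:ℝ)) (mem_univ t) ha hb hab
    have harg : (1 - t2 / t) • (0:ℝ) + (t2 / t) • t = t2 := by
      simp only [smul_eq_mul, mul_zero, zero_add]
      exact div_mul_cancel₀ t2 ht0.ne
    rw [harg, h0, smul_eq_mul, smul_eq_mul, mul_zero, zero_add] at hcv
    have h6 : 1 * (-t) ≤ (t2 / t * h t) * (-t) :=
      mul_le_mul_of_nonneg_right (le_trans ht2b hcv) (by linarith)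
    have h7 : (t2 / t * h t) * (-t) = -t2 * h t := by
      have hx : t2 / t * t = t2 := div_mul_cancel₀ t2 ht0.ne
      calc (t2 / t * h t) * (-t) = -(t2 / t * t) * h t := by ring
        _ = -t2 * h t := by rw [hx]
    rw [h7, one_mul] at h6
    rw [div_le_iff₀ (by linarith : (0:ℝ) < -t2)]
    linarith
  -- global linear lower bound
  have key : ∀ t : ℝ, α * |t| - β ≤ h t := by
    intro t
    rcases le_total |t| M with hMt | hMt
    · have h1 : α * |t| ≤ α * M := mul_le_mul_of_nonneg_left hMt hα.le
      have := hpos t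
      rw [hβdef] at *
      linarith
    · rcases le_total 0 t with ht | ht
      · have htabs : |t| = t := abs_of_nonneg ht
        have htM : t1 ≤ t := le_trans (le_max_left _ _) (htabs ▸ hMt)
        have hs := slope_pos t htM
        have hαle : α ≤ 1 / t1 := min_le_left _ _
        have h1 : α * t ≤ (1 / t1) * t := mul_le_mul_of_nonneg_right hαle ht
        have h2 : (1 / t1) * t = t / t1 := by ring
        rw [htabs]
        linarith
      · have htabs : |t| = -t := abs_of_nonpos ht
        have htM : t ≤ t2 := by
          have : -t2 ≤ -t := le_trans (le_max_right _ _) (htabs ▸ hMt)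
          linarith
        have hs := slope_neg t htM
        have hαle : α ≤ 1 / (-t2) := min_le_right _ _
        have h1 : α * (-t) ≤ (1 / (-t2)) * (-t) := mul_le_mul_of_nonneg_right hαle (by linarith)
        have h2 : (1 / (-t2)) * (-t) = (-t) / (-t2) := by ring
        rw [htabs]
        linarith
  -- a.e. nonnegativity of the demand
  have hs_nonneg : ∀ᵐ s ∂μ, 0 ≤ s := by
    rw [ae_iff]
    simp only [not_le]
    exact hμ0
  -- the identity is integrable
  have hsum : Integrable (fun s : ℝ => α⁻¹ * (h (0 - s) + β)) μ := by
    have := ((hint 0).add (integrable_const β)).const_mul α⁻¹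
    simpa using this
  have hid : Integrable (fun s : ℝ => s) μ := by
    refine Integrable.mono hsum aestronglyMeasurable_id ?_
    filter_upwards [hs_nonneg] with s hs
    have hk := key (0 - s)
    rw [abs_of_nonpos (by linarith : (0:ℝ) - s ≤ 0), neg_sub, sub_zero] at hk
    have hrhs : 0 ≤ α⁻¹ * (h (0 - s) + β) :=
      mul_nonneg (inv_nonneg.2 hα.le) (add_nonneg (hpos _) hβ)
    rw [Real.norm_eq_abs, Real.norm_eq_abs, abs_of_nonneg hs, abs_of_nonneg hrhs]
    have h8 : α * s ≤ h (0 - s) + β := by linarith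
    have h9 := mul_le_mul_of_nonneg_left h8 (inv_nonneg.2 hα.le)
    rwa [← mul_assoc, inv_mul_cancel₀ hα.ne', one_mul] at h9
  set m : ℝ := ∫ s, s ∂μ with hmdef
  -- lower bound on the integral term
  have Flb : ∀ y : ℝ, α * |y - m| - β ≤ ∫ s, h (y - s) ∂μ := by
    intro y
    have habsint : Integrable (fun s : ℝ => |y - s|) μ := by
      simpa using ((integrable_const y).sub hid).abs
    have hint1 : Integrable (fun s : ℝ => α * |y - s| - β) μ :=
      (habsint.const_mul α).sub (integrable_const β)
    have h1 : ∫ s, (α * |y - s| - β) ∂μ ≤ ∫ s, h (y - s) ∂μ :=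
      integral_mono hint1 (hint y) (fun s => key (y - s))
    have h2 : ∫ s, (α * |y - s| - β) ∂μ = α * (∫ s, |y - s| ∂μ) - β := by
      rw [integral_sub (habsint.const_mul α) (integrable_const β),
        integral_const_mul, integral_const]
      simp
    have h3 : |∫ s, (y - s) ∂μ| ≤ ∫ s, |y - s| ∂μ := by
      have := norm_integral_le_integral_norm (μ := μ) (fun s : ℝ => y - s)
      simpa only [Real.norm_eq_abs] using this
    have h4 : ∫ s, (y - s) ∂μ = y - m := by
      rw [integral_sub (integrable_const y) hid, integral_const]
      simp [hmdef]
    rw [h4] at h3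
    have h5 : α * |y - m| ≤ α * ∫ s, |y - s| ∂μ := mul_le_mul_of_nonneg_left h3 hα.le
    linarith
  -- the integral term as a function; it is convex, hence continuous
  set F : ℝ → ℝ := fun y => ∫ s, h (y - s) ∂μ with hFdef
  have hFconv : ConvexOn ℝ Set.univ F := by
    refine ⟨convex_univ, fun y _ z _ a b ha hb hab => ?_⟩
    have hpt : ∀ s : ℝ, h (a • y + b • z - s) ≤ a * h (y - s) + b * h (z - s) := by
      intro s
      have hcv := hconv.2 (mem_univ (y - s)) (mem_univ (z - s)) ha hb hab
      have harg : a • (y - s) + b • (z - s) = a • y + b • z - s := by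
        simp only [smul_eq_mul]
        linear_combination (-s) * hab
      rw [harg] at hcv
      simpa using hcv
    calc F (a • y + b • z) ≤ ∫ s, (a * h (y - s) + b * h (z - s)) ∂μ := by
          refine integral_mono (hint _) ?_ hpt
          exact ((hint y).const_mul a).add ((hint z).const_mul b)
      _ = a • F y + b • F z := by
          rw [integral_add ((hint y).const_mul a) ((hint z).const_mul b),
            integral_const_mul, integral_const_mul]
          simp [hFdef]
  have hFcont : Continuous F :=
    continuousOn_univ.1 (hFconv.continuousOn isOpen_univ)
  have hF0 : ∀ y, 0 ≤ F y := fun y => integral_nonneg fun s => hpos _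
  -- the level set
  set S : Set (ℝ × ℝ) := {p : ℝ × ℝ | 0 ≤ p.2 ∧
      (if 0 < p.2 then K else 0) + cbar * p.2 + ∫ s, h (p.1 + p.2 - s) ∂μ ≤ lam} with hSdef
  -- S is closed
  have hSclosed : IsClosed S := by
    have hlsc : LowerSemicontinuous (fun p : ℝ × ℝ =>
        (if 0 < p.2 then K else 0) + (cbar * p.2 + F (p.1 + p.2))) := by
      have h1 : LowerSemicontinuous (fun p : ℝ × ℝ => if 0 < p.2 then K else 0) := by
        have hop : IsOpen {p : ℝ × ℝ | 0 < p.2} := isOpen_lt continuous_const continuous_snd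
        have h1' := hop.lowerSemicontinuous_indicator (y := K) hK
        have heq : (fun p : ℝ × ℝ => if 0 < p.2 then K else 0)
            = Set.indicator {p : ℝ × ℝ | 0 < p.2} (fun _ => K) := by
          funext p
          simp [Set.indicator_apply]
        rw [heq]
        exact h1'
      have h2 : Continuous (fun p : ℝ × ℝ => cbar * p.2 + F (p.1 + p.2)) :=
        (continuous_const.mul continuous_snd).add
          (hFcont.comp (continuous_fst.add continuous_snd))
      exact h1.add h2.lowerSemicontinuous
    have h3 : S = {p : ℝ × ℝ | 0 ≤ p.2} ∩
        (fun p : ℝ × ℝ => (if 0 < p.2 then K else 0) + (cbar * p.2 + F (p.1 + p.2))) ⁻¹'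
          Set.Iic lam := by
      ext p
      simp only [hSdef, Set.mem_setOf_eq, Set.mem_inter_iff, Set.mem_preimage, Set.mem_Iic,
        hFdef]
      constructor
      · rintro ⟨hp1, hp2⟩; exact ⟨hp1, by linarith⟩
      · rintro ⟨hp1, hp2⟩; exact ⟨hp1, by linarith⟩
    rw [h3]
    exact (isClosed_le continuous_const continuous_snd).inter (hlsc.isClosed_preimage lam)
  -- S is contained in a compact box
  set R : ℝ := (lam + β) / α with hRdef
  set A : ℝ := lam / cbar with hAdef
  have hsub : S ⊆ Set.Icc (m - R - A) (m + R) ×ˢ Set.Icc 0 A := by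
    rintro ⟨x, a⟩ ⟨ha0, hle⟩
    simp only at ha0 hle
    have hind : 0 ≤ (if 0 < a then K else 0) := by split_ifs <;> simp [hK]
    have hFxa : 0 ≤ F (x + a) := hF0 _
    have hFle : F (x + a) ≤ lam := by
      have : cbar * a ≥ 0 := by positivity
      simp only [hFdef] at *
      linarith
    have haA : a ≤ A := by
      rw [hAdef, le_div_iff₀ hc]
      have : (0:ℝ) ≤ F (x + a) := hFxa
      simp only [hFdef] at *
      nlinarith
    have habs : |x + a - m| ≤ R := by
      rw [hRdef, le_div_iff₀ hα]
      have := Flb (x + a)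
      simp only [hFdef] at *
      nlinarith
    rw [abs_le] at habs
    constructor
    · constructor
      · simp only; linarith
      · simp only; linarith
    · exact ⟨ha0, haA⟩
  exact IsCompact.of_isClosed_subset (isCompact_Icc.prod isCompact_Icc) hSclosed hsub
end
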